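/- arXiv:2310.19793 — 5 statements merged into one kernel-verified Lean document; each statement's English description precedes it below -/
import Mathlib

section
/- Let p, q, r be positive integers, let M be a real r×p matrix and N a real p×q matrix with operator norms ‖M‖ ≤ 1 and ‖N‖ ≤ 1 (hence ‖MN‖ ≤ 1). Then: (i) for every square-integrable f : ℝ^q → ℝ, A_M(A_N f) = A_{MN} f holds γ_r-almost everywhere, and P_M(P_N f) = P_{MN} f holds pointwise; (ii) if V is a real r×q matrix with VᵀV = I_q, then for every f ∈ L²_{γ_q}, A_V f = P_V f γ_r-almost everywhere. -/
open MeasureTheory ProbabilityTheory Filter Matrix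

noncomputable section

/-- Standard Gaussian measure on `ℝ^q`. -/
def stdGaussian (q : ℕ) : Measure (Fin q → ℝ) :=
  Measure.pi fun _ => gaussianReal 0 1

/-- Gaussian inner product `⟨f,g⟩_{γ_q}`. -/
def gInner (q : ℕ) (f g : (Fin q → ℝ) → ℝ) : ℝ :=
  ∫ x, f x * g x ∂(stdGaussian q)

open scoped Classical in
/-- The averaging operator `A_M` (defined when `I - MᵀM` is PSD, i.e. `‖M‖ ≤ 1`). -/
def avg {q r : ℕ} (M : Matrix (Fin q) (Fin r) ℝ) (f : (Fin r → ℝ) → ℝ) :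
    (Fin q → ℝ) → ℝ :=
  if h : (1 - Mᵀ * M).PosSemidef then
    fun z => ∫ y, f (Mᵀ *ᵥ z + (h.1.eigenvectorUnitary.1 * diagonal (fun i => Real.sqrt (h.1.eigenvalues i)) *
        (star h.1.eigenvectorUnitary : Matrix (Fin r) (Fin r) ℝ)) *ᵥ y) ∂(stdGaussian r)
  else 0

/-- The change of variables operator `P_M`. -/
def changeVar {q r : ℕ} (M : Matrix (Fin q) (Fin r) ℝ) (f : (Fin r → ℝ) → ℝ) :
    (Fin q → ℝ) → ℝ :=
  fun z => f (Mᵀ *ᵥ z)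

/-- Operator (`ℓ² → ℓ²`) norm of a matrix. -/
def matOpNorm {q r : ℕ} (M : Matrix (Fin q) (Fin r) ℝ) : ℝ :=
  ‖LinearMap.toContinuousLinearMap (Matrix.toEuclideanLin M)‖

open scoped ENNReal
namespace Matrix.PosSemidef
variable {n : Type*} [Fintype n] [DecidableEq n] {A : Matrix n n ℝ}

noncomputable def sqrt (h : A.PosSemidef) : Matrix n n ℝ :=
  h.1.eigenvectorUnitary.1 * diagonal (fun i => Real.sqrt (h.1.eigenvalues i)) *
    (star h.1.eigenvectorUnitary : Matrix n n ℝ)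

theorem sqrt_def (h : A.PosSemidef) : h.sqrt = h.1.eigenvectorUnitary.1 *
    diagonal (fun i => Real.sqrt (h.1.eigenvalues i)) *
    (star h.1.eigenvectorUnitary : Matrix n n ℝ) := rfl

theorem sqrt_mul_self (h : A.PosSemidef) : h.sqrt * h.sqrt = A := by
  have hA := h.1.spectral_theorem
  simp only [Unitary.conjStarAlgAut_apply] at hA
  have hu : (star h.1.eigenvectorUnitary : Matrix n n ℝ) * h.1.eigenvectorUnitary.1 = 1 :=
    Unitary.coe_star_mul_self _
  conv_rhs => rw [hA]
  simp only [sqrt, Matrix.mul_assoc]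
  rw [← Matrix.mul_assoc (star h.1.eigenvectorUnitary : Matrix n n ℝ) _ _, hu, Matrix.one_mul,
    ← Matrix.mul_assoc (diagonal _) (diagonal _), diagonal_mul_diagonal]
  congr 3
  funext i
  simp [Real.mul_self_sqrt (h.eigenvalues_nonneg i)]

theorem posSemidef_sqrt (h : A.PosSemidef) : h.sqrt.PosSemidef := by
  have hd : (diagonal fun i => Real.sqrt (h.1.eigenvalues i)).PosSemidef :=
    posSemidef_diagonal_iff.2 fun i => Real.sqrt_nonneg _
  have := hd.mul_mul_conjTranspose_same h.1.eigenvectorUnitary.1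
  rw [sqrt, star_eq_conjTranspose]
  exact this

end Matrix.PosSemidef

theorem EuclideanSpace.inner_piLp_equiv_symm {ι 𝕜 : Type*} [RCLike 𝕜] [Fintype ι] (x y : ι → 𝕜) :
    inner 𝕜 ((WithLp.equiv 2 (ι → 𝕜)).symm x) ((WithLp.equiv 2 (ι → 𝕜)).symm y)
      = dotProduct (star x) y := by
  rw [dotProduct_comm]; rfl

theorem Matrix.toEuclideanLin_apply_piLp_equiv_symm {m n 𝕜 : Type*} [RCLike 𝕜] [Fintype n]
    [DecidableEq n] (M : Matrix m n 𝕜) (v : n → 𝕜) :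
    Matrix.toEuclideanLin M ((WithLp.equiv 2 (n → 𝕜)).symm v)
      = (WithLp.equiv 2 (m → 𝕜)).symm (M *ᵥ v) := rfl

theorem Matrix.piLp_equiv_toEuclideanLin_apply {m n 𝕜 : Type*} [RCLike 𝕜] [Fintype n]
    [DecidableEq n] (M : Matrix m n 𝕜) (v : EuclideanSpace 𝕜 n) :
    WithLp.equiv 2 (m → 𝕜) (Matrix.toEuclideanLin M v) = M *ᵥ WithLp.equiv 2 (n → 𝕜) v := rfl

namespace AvgAux

/-- Standard Gaussian over an arbitrary finite index type. -/
def gauss (ι : Type*) [Fintype ι] : Measure (ι → ℝ) := Measure.pi fun _ => gaussianReal 0 1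

instance (ι : Type*) [Fintype ι] : IsProbabilityMeasure (gauss ι) := by
  unfold gauss; infer_instance

instance (ι : Type*) [Fintype ι] : SFinite (gauss ι) := by unfold gauss; infer_instance

lemma measurable_mulVec {ι κ : Type*} [Fintype ι] [Fintype κ] (M : Matrix κ ι ℝ) :
    Measurable (fun x : ι → ℝ => M *ᵥ x) := by
  have : Continuous fun x : ι → ℝ => M *ᵥ x := by
    have := LinearMap.continuous_on_pi (M.mulVecLin)
    exact this
  exact this.measurable

lemma lintegral_fin_prod {n : ℕ} (ν : Measure ℝ) [SigmaFinite ν] (f : Fin n → ℝ → ℝ≥0∞)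
    (hf : ∀ i, Measurable (f i)) :
    ∫⁻ x : Fin n → ℝ, ∏ i, f i (x i) ∂(Measure.pi fun _ => ν) = ∏ i, ∫⁻ t, f i t ∂ν := by
  induction n with
  | zero => simp
  | succ n ih =>
    have h := (measurePreserving_piFinSuccAbove (fun _ : Fin (n+1) => ν) 0).symm
    rw [← h.map_eq, lintegral_map_equiv]
    simp_rw [MeasurableEquiv.piFinSuccAbove_symm_apply, Fin.insertNthEquiv,
      Fin.prod_univ_succ, Fin.insertNth_zero, Equiv.coe_fn_mk]
    simp only [Fin.zero_succAbove, cast_eq, Fin.cons_zero, Fin.cons_succ]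
    have h2 : AEMeasurable (fun x : Fin n → ℝ => ∏ i, f i.succ (x i))
        (Measure.pi fun _ => ν) := by
      refine Measurable.aemeasurable ?_
      exact Finset.measurable_prod _ fun i _ => (hf i.succ).comp (measurable_pi_apply i)
    rw [lintegral_prod_mul (hf 0).aemeasurable h2,
      ih (fun i => f i.succ) (fun i => hf i.succ)]

lemma lintegral_pi_prod {ι : Type*} [Fintype ι] (ν : Measure ℝ) [SigmaFinite ν]
    (f : ι → ℝ → ℝ≥0∞) (hf : ∀ i, Measurable (f i)) :
    ∫⁻ x : ι → ℝ, ∏ i, f i (x i) ∂(Measure.pi fun _ => ν) = ∏ i, ∫⁻ t, f i t ∂ν := by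
  let e := (Fintype.equivFin ι).symm
  have h := measurePreserving_piCongrLeft (fun _ : ι => ν) e
  rw [← h.map_eq, lintegral_map_equiv]
  simp_rw [← e.prod_comp, MeasurableEquiv.coe_piCongrLeft, Equiv.piCongrLeft_apply_apply]
  exact lintegral_fin_prod ν _ fun i => hf _

lemma gauss_eq_withDensity (ι : Type*) [Fintype ι] :
    gauss ι = (volume : Measure (ι → ℝ)).withDensity
      (fun x => ∏ i, gaussianPDF 0 1 (x i)) := by
  unfold gauss
  rw [volume_pi]
  refine Measure.pi_eq fun s hs => ?_
  rw [withDensity_apply _ (MeasurableSet.univ_pi hs), ← lintegral_indicator (MeasurableSet.univ_pi hs) _]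
  have key : ∀ x : ι → ℝ, (Set.univ.pi s).indicator
      (fun x => ∏ i, gaussianPDF 0 1 (x i)) x
      = ∏ i, (s i).indicator (gaussianPDF 0 1) (x i) := by
    intro x
    by_cases hx : x ∈ Set.univ.pi s
    · rw [Set.indicator_of_mem hx]
      exact Finset.prod_congr rfl fun i _ =>
        (Set.indicator_of_mem (hx i (Set.mem_univ i)) _).symm
    · rw [Set.indicator_of_notMem hx]
      have hex : ∃ i, x i ∉ s i := by
        by_contra h
        push_neg at h
        exact hx fun i _ => h i
      obtain ⟨i, hi⟩ := hex
      exact (Finset.prod_eq_zero (Finset.mem_univ i)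
        (Set.indicator_of_notMem hi _)).symm
  simp_rw [key]
  rw [lintegral_pi_prod _ _ (fun i => (measurable_gaussianPDF 0 1).indicator (hs i))]
  refine Finset.prod_congr rfl fun i _ => ?_
  rw [lintegral_indicator (hs i) _, gaussianReal_of_var_ne_zero 0 one_ne_zero,
    withDensity_apply _ (hs i)]


lemma mulVec_dot_self {ι : Type*} [Fintype ι] [DecidableEq ι] (O : Matrix ι ι ℝ)
    (hO' : Oᵀ * O = 1) (x : ι → ℝ) : (O *ᵥ x) ⬝ᵥ (O *ᵥ x) = x ⬝ᵥ x := by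
  calc (O *ᵥ x) ⬝ᵥ (O *ᵥ x) = (x ᵥ* Oᵀ) ⬝ᵥ (O *ᵥ x) := by rw [vecMul_transpose]
    _ = x ⬝ᵥ (Oᵀ *ᵥ (O *ᵥ x)) := (dotProduct_mulVec x Oᵀ (O *ᵥ x)).symm
    _ = x ⬝ᵥ ((Oᵀ * O) *ᵥ x) := by rw [mulVec_mulVec]
    _ = x ⬝ᵥ x := by rw [hO', one_mulVec]

lemma measurable_gaussDensity (ι : Type*) [Fintype ι] :
    Measurable (fun x : ι → ℝ => ∏ i, gaussianPDF 0 1 (x i)) :=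
  Finset.measurable_prod _ fun i _ =>
    (measurable_gaussianPDF 0 1).comp (measurable_pi_apply i)

lemma map_withDensity_equiv {α : Type*} [MeasurableSpace α] (e : α ≃ᵐ α)
    (μ : Measure α) (D : α → ℝ≥0∞) (hD : Measurable D) :
    (μ.withDensity (fun x => D (e x))).map e = (μ.map e).withDensity D := by
  ext s hs
  rw [Measure.map_apply e.measurable hs, withDensity_apply _ (e.measurable hs),
    withDensity_apply _ hs]
  exact (setLIntegral_map hs hD e.measurable).symm

lemma map_mulVec_gauss_orth {ι : Type*} [Fintype ι] [DecidableEq ι] (O : Matrix ι ι ℝ)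
    (hO : O * Oᵀ = 1) :
    (gauss ι).map (fun x => O *ᵥ x) = gauss ι := by
  have hO' : Oᵀ * O = 1 := mul_eq_one_comm.mp hO
  have hdet : O.det * O.det = 1 := by
    have h := congrArg Matrix.det hO
    rwa [det_mul, det_transpose, det_one] at h
  have hdet1 : |O.det⁻¹| = 1 := by
    rcases mul_self_eq_one_iff.mp hdet with h | h <;> rw [h] <;> norm_num
  have hdetne : O.det ≠ 0 := by
    intro h; rw [h] at hdet; norm_num at hdet
  set D : (ι → ℝ) → ℝ≥0∞ := fun x => ∏ i, gaussianPDF 0 1 (x i) with hDdef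
  have hD : Measurable D := measurable_gaussDensity ι
  have hsum : ∀ x : ι → ℝ, ∑ i, (O *ᵥ x) i ^ 2 = ∑ i, x i ^ 2 := by
    intro x
    have h := mulVec_dot_self O hO' x
    simpa [dotProduct, sq] using h
  have hDinv : ∀ x : ι → ℝ, D (O *ᵥ x) = D x := by
    intro x
    simp only [hDdef, gaussianPDF, gaussianPDFReal]
    rw [← ENNReal.ofReal_prod_of_nonneg, ← ENNReal.ofReal_prod_of_nonneg]
    · congr 1
      rw [Finset.prod_mul_distrib, Finset.prod_mul_distrib, ← Real.exp_sum, ← Real.exp_sum,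
        ← Finset.sum_div, ← Finset.sum_div]
      simp only [sub_zero]
      congr 3
      rw [Finset.sum_neg_distrib, Finset.sum_neg_distrib, hsum x]
    · intro i _
      positivity
    · intro i _
      positivity
  let e : (ι → ℝ) ≃ᵐ (ι → ℝ) :=
    { toFun := fun x => O *ᵥ x
      invFun := fun x => Oᵀ *ᵥ x
      left_inv := fun x => by simp [mulVec_mulVec, hO', one_mulVec]
      right_inv := fun x => by simp [mulVec_mulVec, hO, one_mulVec]
      measurable_toFun := measurable_mulVec O
      measurable_invFun := measurable_mulVec Oᵀ }
  have hvol : Measure.map (fun x : ι → ℝ => O *ᵥ x) volume = volume := by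
    have h := Real.map_matrix_volume_pi_eq_smul_volume_pi (M := O) hdetne
    rw [show ⇑(Matrix.toLin' O) = fun x : ι → ℝ => O *ᵥ x from
      funext fun x => Matrix.toLin'_apply O x] at h
    rw [h, hdet1]
    simp
  have he : ⇑e = fun x : ι → ℝ => O *ᵥ x := rfl
  rw [gauss_eq_withDensity]
  have hcongr : (volume : Measure (ι → ℝ)).withDensity D
      = (volume : Measure (ι → ℝ)).withDensity (fun x => D (e x)) := by
    congr 1
    funext x
    exact (hDinv x).symm
  calc ((volume : Measure (ι → ℝ)).withDensity D).map (fun x => O *ᵥ x)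
      = ((volume : Measure (ι → ℝ)).withDensity (fun x => D (e x))).map e := by
        rw [← hcongr, he]
    _ = ((volume : Measure (ι → ℝ)).map e).withDensity D :=
        map_withDensity_equiv e _ D hD
    _ = (volume : Measure (ι → ℝ)).withDensity D := by rw [he, hvol]


section Core

variable {ι κ : Type*} [Fintype ι] [DecidableEq ι] [Fintype κ] [DecidableEq κ]

lemma dot_gram (C : Matrix κ ι ℝ) (a : κ → ℝ) :
    (Cᵀ *ᵥ a) ⬝ᵥ (Cᵀ *ᵥ a) = a ⬝ᵥ ((C * Cᵀ) *ᵥ a) := by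
  calc (Cᵀ *ᵥ a) ⬝ᵥ (Cᵀ *ᵥ a) = (a ᵥ* C) ⬝ᵥ (Cᵀ *ᵥ a) := by rw [mulVec_transpose]
    _ = a ⬝ᵥ (C *ᵥ (Cᵀ *ᵥ a)) := (dotProduct_mulVec a C (Cᵀ *ᵥ a)).symm
    _ = a ⬝ᵥ ((C * Cᵀ) *ᵥ a) := by rw [mulVec_mulVec]

lemma map_mulVec_gauss_eq_of_gram (C₁ C₂ : Matrix κ ι ℝ) (h : C₁ * C₁ᵀ = C₂ * C₂ᵀ) :
    (gauss ι).map (fun x => C₁ *ᵥ x) = (gauss ι).map (fun x => C₂ *ᵥ x) := by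
  classical
  set T₁ := Matrix.toEuclideanLin C₁ᵀ with hT₁
  set T₂ := Matrix.toEuclideanLin C₂ᵀ with hT₂
  have hsq : ∀ (C : Matrix κ ι ℝ) (a : EuclideanSpace ℝ κ),
      ‖Matrix.toEuclideanLin Cᵀ a‖ * ‖Matrix.toEuclideanLin Cᵀ a‖
        = ((WithLp.equiv 2 (κ → ℝ)) a) ⬝ᵥ ((C * Cᵀ) *ᵥ ((WithLp.equiv 2 (κ → ℝ)) a)) := by
    intro C a
    rw [← real_inner_self_eq_norm_mul_norm, Matrix.toEuclideanLin_apply,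
      EuclideanSpace.inner_toLp_toLp, star_trivial]
    exact dot_gram C _
  have hnorm : ∀ a : EuclideanSpace ℝ κ, ‖T₁ a‖ = ‖T₂ a‖ := by
    intro a
    refine (mul_self_inj (norm_nonneg _) (norm_nonneg _)).mp ?_
    rw [hT₁, hT₂, hsq C₁ a, hsq C₂ a, h]
  have hker : LinearMap.ker T₂ ≤ LinearMap.ker T₁ := by
    intro a ha
    rw [LinearMap.mem_ker] at ha ⊢
    have h2 := hnorm a
    rw [ha, norm_zero, norm_eq_zero] at h2
    exact h2
  set S := LinearMap.range T₂ with hS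
  let φ₀ : S →ₗ[ℝ] EuclideanSpace ℝ ι :=
    (Submodule.liftQ (LinearMap.ker T₂) T₁ hker).comp
      (LinearMap.quotKerEquivRange T₂).symm.toLinearMap
  have hφ₀ : ∀ a : EuclideanSpace ℝ κ,
      φ₀ ⟨T₂ a, LinearMap.mem_range_self _ a⟩ = T₁ a := by
    intro a
    have h2 : (LinearMap.quotKerEquivRange T₂).symm ⟨T₂ a, LinearMap.mem_range_self _ a⟩
        = Submodule.Quotient.mk a := by
      rw [LinearEquiv.symm_apply_eq]
      exact Subtype.ext (LinearMap.quotKerEquivRange_apply_mk T₂ a).symm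
    simp only [φ₀, LinearMap.comp_apply, LinearEquiv.coe_coe, h2, Submodule.liftQ_apply]
  have hφn : ∀ s : S, ‖φ₀ s‖ = ‖s‖ := by
    rintro ⟨-, a, rfl⟩
    have h3 : φ₀ ⟨T₂ a, ⟨a, rfl⟩⟩ = T₁ a := hφ₀ a
    rw [h3]
    exact hnorm a
  let ψ : S →ₗᵢ[ℝ] EuclideanSpace ℝ ι := ⟨φ₀, hφn⟩
  let Φ := ψ.extend
  have hΦ : ∀ a, Φ (T₂ a) = T₁ a := fun a =>
    (LinearIsometry.extend_apply ψ ⟨T₂ a, LinearMap.mem_range_self _ a⟩).trans (hφ₀ a)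
  let O : Matrix ι ι ℝ := Matrix.toEuclideanLin.symm Φ.toLinearMap
  have hOlin : Matrix.toEuclideanLin O = Φ.toLinearMap :=
    Matrix.toEuclideanLin.apply_symm_apply _
  have hOapp : ∀ w : ι → ℝ, O *ᵥ w
      = (WithLp.equiv 2 (ι → ℝ)) (Φ ((WithLp.equiv 2 (ι → ℝ)).symm w)) := by
    intro w
    have h5 : Φ ((WithLp.equiv 2 (ι → ℝ)).symm w)
        = Matrix.toEuclideanLin O ((WithLp.equiv 2 (ι → ℝ)).symm w) := by rw [hOlin]; rfl
    rw [h5, Matrix.piLp_equiv_toEuclideanLin_apply, Equiv.apply_symm_apply]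
  have hu : ∀ w : ι → ℝ, (WithLp.equiv 2 (ι → ℝ)).symm (O *ᵥ w)
      = Φ ((WithLp.equiv 2 (ι → ℝ)).symm w) := by
    intro w
    rw [hOapp w, Equiv.symm_apply_apply]
  have hOO : Oᵀ * O = 1 := by
    ext i j
    have hinner := Φ.inner_map_map ((WithLp.equiv 2 (ι → ℝ)).symm (Pi.single i 1))
      ((WithLp.equiv 2 (ι → ℝ)).symm (Pi.single j 1))
    rw [← hu, ← hu, EuclideanSpace.inner_piLp_equiv_symm,
      EuclideanSpace.inner_piLp_equiv_symm, star_trivial, star_trivial] at hinner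
    have lhs : (O *ᵥ Pi.single i 1) ⬝ᵥ (O *ᵥ Pi.single j 1) = (Oᵀ * O) i j := by
      simp [dotProduct, Matrix.mulVec_single, Matrix.mul_apply]
    have rhs : (Pi.single i 1 : ι → ℝ) ⬝ᵥ (Pi.single j 1 : ι → ℝ)
        = (1 : Matrix ι ι ℝ) i j := by
      rw [single_dotProduct, Pi.single_apply, Matrix.one_apply]
      simp [eq_comm]
    rw [lhs, rhs] at hinner
    exact hinner
  have hvec : ∀ w : κ → ℝ, O *ᵥ (C₂ᵀ *ᵥ w) = C₁ᵀ *ᵥ w := by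
    intro w
    have h7 := hΦ ((WithLp.equiv 2 (κ → ℝ)).symm w)
    rw [hT₁, hT₂, Matrix.toEuclideanLin_apply_piLp_equiv_symm,
      Matrix.toEuclideanLin_apply_piLp_equiv_symm, ← hu] at h7
    have h8 := congrArg (WithLp.equiv 2 (ι → ℝ)) h7
    simpa using h8
  have hmat : C₂ * Oᵀ = C₁ := by
    have hmatT : O * C₂ᵀ = C₁ᵀ := by
      apply Matrix.toLin'.injective
      apply LinearMap.ext
      intro w
      simp only [Matrix.toLin'_apply]
      rw [← Matrix.mulVec_mulVec]
      exact hvec w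
    have := congrArg Matrix.transpose hmatT
    rwa [Matrix.transpose_mul, Matrix.transpose_transpose, Matrix.transpose_transpose] at this
  calc (gauss ι).map (fun x => C₁ *ᵥ x)
      = (gauss ι).map ((fun x => C₂ *ᵥ x) ∘ (fun x : ι → ℝ => Oᵀ *ᵥ x)) := by
        congr 1
        funext x
        simp only [Function.comp_apply, Matrix.mulVec_mulVec, hmat]
    _ = ((gauss ι).map (fun x : ι → ℝ => Oᵀ *ᵥ x)).map (fun x => C₂ *ᵥ x) :=
        (Measure.map_map (measurable_mulVec C₂) (measurable_mulVec Oᵀ)).symm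
    _ = (gauss ι).map (fun x => C₂ *ᵥ x) := by
        rw [map_mulVec_gauss_orth Oᵀ (by rw [Matrix.transpose_transpose]; exact hOO)]

end Core


section Split

variable {ι₁ ι₂ κ : Type*} [Fintype ι₁] [Fintype ι₂] [Fintype κ]
  [DecidableEq ι₁] [DecidableEq ι₂] [DecidableEq κ]

lemma map_pair_eq_map_fromColumns (A : Matrix κ ι₁ ℝ) (B : Matrix κ ι₂ ℝ) :
    ((gauss ι₁).prod (gauss ι₂)).map (fun v : (ι₁ → ℝ) × (ι₂ → ℝ) => A *ᵥ v.1 + B *ᵥ v.2)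
      = (gauss (ι₁ ⊕ ι₂)).map (fun x => fromCols A B *ᵥ x) := by
  have hmp : MeasurePreserving (MeasurableEquiv.sumPiEquivProdPi (fun _ : ι₁ ⊕ ι₂ => ℝ))
      (gauss (ι₁ ⊕ ι₂)) ((gauss ι₁).prod (gauss ι₂)) := by
    unfold gauss
    exact measurePreserving_sumPiEquivProdPi _
  have hf : Measurable (fun v : (ι₁ → ℝ) × (ι₂ → ℝ) => A *ᵥ v.1 + B *ᵥ v.2) :=
    ((measurable_mulVec A).comp measurable_fst).add
      ((measurable_mulVec B).comp measurable_snd)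
  rw [← hmp.map_eq, Measure.map_map hf (MeasurableEquiv.measurable _)]
  congr 1
  funext x
  have hx : (Sum.elim (fun i => x (Sum.inl i)) (fun i => x (Sum.inr i)) : ι₁ ⊕ ι₂ → ℝ) = x := by
    funext s; cases s <;> rfl
  show A *ᵥ (fun i => x (Sum.inl i)) + B *ᵥ (fun i => x (Sum.inr i))
      = fromCols A B *ᵥ x
  conv_rhs => rw [← hx]
  rw [fromCols_mulVec_sumElim]

lemma map_pushPair (A : Matrix κ ι₁ ℝ) (B D : Matrix κ ι₂ ℝ)
    (h : A * Aᵀ + B * Bᵀ = D * Dᵀ) :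
    ((gauss ι₁).prod (gauss ι₂)).map (fun v : (ι₁ → ℝ) × (ι₂ → ℝ) => A *ᵥ v.1 + B *ᵥ v.2)
      = (gauss ι₂).map (fun u => D *ᵥ u) := by
  rw [map_pair_eq_map_fromColumns]
  have hgram : fromCols A B * (fromCols A B)ᵀ
      = fromCols (0 : Matrix κ ι₁ ℝ) D * (fromCols (0 : Matrix κ ι₁ ℝ) D)ᵀ := by
    rw [transpose_fromCols, transpose_fromCols, fromCols_mul_fromRows,
      fromCols_mul_fromRows, h, Matrix.zero_mul, zero_add]
  rw [map_mulVec_gauss_eq_of_gram _ _ hgram, ← map_pair_eq_map_fromColumns]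
  have hsplit : (fun v : (ι₁ → ℝ) × (ι₂ → ℝ) => (0 : Matrix κ ι₁ ℝ) *ᵥ v.1 + D *ᵥ v.2)
      = (fun u => D *ᵥ u) ∘ Prod.snd := by
    funext v
    simp [zero_mulVec]
  rw [hsplit, ← Measure.map_map (measurable_mulVec D) measurable_snd,
    Measure.map_snd_prod]
  simp

lemma map_pushTriple {ι₀ : Type*} [Fintype ι₀] [DecidableEq ι₀]
    (A : Matrix κ ι₀ ℝ) (B : Matrix κ ι₁ ℝ) (C D₁ D : Matrix κ ι₂ ℝ)
    (h1 : B * Bᵀ + C * Cᵀ = D₁ * D₁ᵀ) (h2 : A * Aᵀ + D₁ * D₁ᵀ = D * Dᵀ) :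
    ((gauss ι₀).prod ((gauss ι₁).prod (gauss ι₂))).map
        (fun t : (ι₀ → ℝ) × ((ι₁ → ℝ) × (ι₂ → ℝ)) => A *ᵥ t.1 + (B *ᵥ t.2.1 + C *ᵥ t.2.2))
      = (gauss ι₂).map (fun u => D *ᵥ u) := by
  have hg : Measurable (fun s : (ι₁ → ℝ) × (ι₂ → ℝ) => B *ᵥ s.1 + C *ᵥ s.2) :=
    ((measurable_mulVec B).comp measurable_fst).add
      ((measurable_mulVec C).comp measurable_snd)
  have hadd : Measurable (fun v : (ι₀ → ℝ) × (κ → ℝ) => A *ᵥ v.1 + v.2) :=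
    ((measurable_mulVec A).comp measurable_fst).add measurable_snd
  have hD₁ : Measurable (fun u : ι₂ → ℝ => D₁ *ᵥ u) := measurable_mulVec D₁
  calc ((gauss ι₀).prod ((gauss ι₁).prod (gauss ι₂))).map
        (fun t : (ι₀ → ℝ) × ((ι₁ → ℝ) × (ι₂ → ℝ)) => A *ᵥ t.1 + (B *ᵥ t.2.1 + C *ᵥ t.2.2))
      = (((gauss ι₀).prod ((gauss ι₁).prod (gauss ι₂))).map
          (Prod.map (id : (ι₀ → ℝ) → _) (fun s : (ι₁ → ℝ) × (ι₂ → ℝ) => B *ᵥ s.1 + C *ᵥ s.2))).map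
          (fun v : (ι₀ → ℝ) × (κ → ℝ) => A *ᵥ v.1 + v.2) := by
        rw [Measure.map_map hadd (measurable_id.prodMap hg)]
        rfl
    _ = (((gauss ι₀).map id).prod (((gauss ι₁).prod (gauss ι₂)).map
          (fun s : (ι₁ → ℝ) × (ι₂ → ℝ) => B *ᵥ s.1 + C *ᵥ s.2))).map
          (fun v : (ι₀ → ℝ) × (κ → ℝ) => A *ᵥ v.1 + v.2) := by
        rw [Measure.map_prod_map _ _ measurable_id hg]
    _ = ((gauss ι₀).prod ((gauss ι₂).map (fun u => D₁ *ᵥ u))).map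
          (fun v : (ι₀ → ℝ) × (κ → ℝ) => A *ᵥ v.1 + v.2) := by
        rw [Measure.map_id, map_pushPair B C D₁ h1]
    _ = (((gauss ι₀).map id).prod ((gauss ι₂).map (fun u => D₁ *ᵥ u))).map
          (fun v : (ι₀ → ℝ) × (κ → ℝ) => A *ᵥ v.1 + v.2) := by rw [Measure.map_id]
    _ = (((gauss ι₀).prod (gauss ι₂)).map
          (Prod.map (id : (ι₀ → ℝ) → _) (fun u : ι₂ → ℝ => D₁ *ᵥ u))).map
          (fun v : (ι₀ → ℝ) × (κ → ℝ) => A *ᵥ v.1 + v.2) := by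
        rw [Measure.map_prod_map _ _ measurable_id hD₁]
    _ = ((gauss ι₀).prod (gauss ι₂)).map
          (fun v : (ι₀ → ℝ) × (ι₂ → ℝ) => A *ᵥ v.1 + D₁ *ᵥ v.2) := by
        rw [Measure.map_map hadd (measurable_id.prodMap hD₁)]
        rfl
    _ = (gauss ι₂).map (fun u => D *ᵥ u) := map_pushPair A D₁ D h2

end Split


section PSD

lemma real_conjTranspose {m n : Type*} (M : Matrix m n ℝ) : Mᴴ = Mᵀ := by
  ext i j
  simp [Matrix.conjTranspose_apply]

lemma posSemidef_one_sub_of_dot {ι κ : Type*} [Fintype ι] [DecidableEq ι] [Fintype κ] [DecidableEq κ]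
    (M : Matrix κ ι ℝ) (h : ∀ x : ι → ℝ, (M *ᵥ x) ⬝ᵥ (M *ᵥ x) ≤ x ⬝ᵥ x) :
    (1 - Mᵀ * M).PosSemidef := by
  refine Matrix.PosSemidef.of_dotProduct_mulVec_nonneg ?_ ?_
  · show (1 - Mᵀ * M)ᴴ = 1 - Mᵀ * M
    rw [Matrix.conjTranspose_sub, Matrix.conjTranspose_one, real_conjTranspose,
      Matrix.transpose_mul, Matrix.transpose_transpose]
  · intro x
    rw [star_trivial]
    have h1 : (M *ᵥ x) ⬝ᵥ (M *ᵥ x) = x ⬝ᵥ ((Mᵀ * M) *ᵥ x) := by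
      have h2 := dot_gram Mᵀ x
      rwa [Matrix.transpose_transpose] at h2
    rw [Matrix.sub_mulVec, dotProduct_sub, Matrix.one_mulVec, ← h1]
    have := h x
    linarith

lemma dot_le_of_matOpNorm {a b : ℕ} (M : Matrix (Fin a) (Fin b) ℝ) (hM : matOpNorm M ≤ 1)
    (x : Fin b → ℝ) : (M *ᵥ x) ⬝ᵥ (M *ᵥ x) ≤ x ⬝ᵥ x := by
  have h1 : ‖(Matrix.toEuclideanLin M) ((WithLp.equiv 2 (Fin b → ℝ)).symm x)‖
      ≤ ‖(WithLp.equiv 2 (Fin b → ℝ)).symm x‖ := by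
    calc ‖(Matrix.toEuclideanLin M) ((WithLp.equiv 2 (Fin b → ℝ)).symm x)‖
        = ‖(LinearMap.toContinuousLinearMap (Matrix.toEuclideanLin M))
            ((WithLp.equiv 2 (Fin b → ℝ)).symm x)‖ := rfl
      _ ≤ matOpNorm M * ‖(WithLp.equiv 2 (Fin b → ℝ)).symm x‖ :=
          (LinearMap.toContinuousLinearMap (Matrix.toEuclideanLin M)).le_opNorm _
      _ ≤ 1 * ‖(WithLp.equiv 2 (Fin b → ℝ)).symm x‖ :=
          mul_le_mul_of_nonneg_right hM (norm_nonneg _)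
      _ = ‖(WithLp.equiv 2 (Fin b → ℝ)).symm x‖ := one_mul _
  have h2 : (M *ᵥ x) ⬝ᵥ (M *ᵥ x)
      = ‖(Matrix.toEuclideanLin M) ((WithLp.equiv 2 (Fin b → ℝ)).symm x)‖
        * ‖(Matrix.toEuclideanLin M) ((WithLp.equiv 2 (Fin b → ℝ)).symm x)‖ := by
    rw [← real_inner_self_eq_norm_mul_norm, Matrix.toEuclideanLin_apply_piLp_equiv_symm,
      EuclideanSpace.inner_piLp_equiv_symm, star_trivial]
  have h3 : x ⬝ᵥ x = ‖(WithLp.equiv 2 (Fin b → ℝ)).symm x‖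
      * ‖(WithLp.equiv 2 (Fin b → ℝ)).symm x‖ := by
    rw [← real_inner_self_eq_norm_mul_norm, EuclideanSpace.inner_piLp_equiv_symm, star_trivial]
  rw [h2, h3]
  exact mul_self_le_mul_self (norm_nonneg _) h1

end PSD

end AvgAux

open AvgAux

instance (n : ℕ) : IsProbabilityMeasure (stdGaussian n) := by
  unfold _root_.stdGaussian; infer_instance

lemma stdGaussian_eq_gauss (n : ℕ) : stdGaussian n = gauss (Fin n) := rfl

/-- Lemma 2.6 (multiplicative properties of the averaging and change-of-variables
operators). -/
theorem averaging_multiplicative {p q r : ℕ} (hp : 0 < p) (hq : 0 < q) (hr : 0 < r)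
    (M : Matrix (Fin r) (Fin p) ℝ) (N : Matrix (Fin p) (Fin q) ℝ)
    (hM : matOpNorm M ≤ 1) (hN : matOpNorm N ≤ 1)
    (V : Matrix (Fin r) (Fin q) ℝ) (hV : Vᵀ * V = 1) :
    (∀ f : (Fin q → ℝ) → ℝ, MemLp f 2 (stdGaussian q) →
      (avg M (avg N f) =ᵐ[stdGaussian r] avg (M * N) f) ∧
      changeVar M (changeVar N f) = changeVar (M * N) f) ∧
    (∀ f : (Fin q → ℝ) → ℝ, MemLp f 2 (stdGaussian q) →
      avg V f =ᵐ[stdGaussian r] changeVar V f) := by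
  classical
  have hMps : (1 - Mᵀ * M).PosSemidef :=
    posSemidef_one_sub_of_dot M (dot_le_of_matOpNorm M hM)
  have hNps : (1 - Nᵀ * N).PosSemidef :=
    posSemidef_one_sub_of_dot N (dot_le_of_matOpNorm N hN)
  have hMNps : (1 - (M * N)ᵀ * (M * N)).PosSemidef := by
    refine posSemidef_one_sub_of_dot _ fun x => ?_
    rw [← Matrix.mulVec_mulVec]
    exact le_trans (dot_le_of_matOpNorm M hM (N *ᵥ x)) (dot_le_of_matOpNorm N hN x)
  have hsymM : hMps.sqrtᵀ = hMps.sqrt := by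
    have h := hMps.posSemidef_sqrt.1
    rwa [Matrix.IsHermitian, real_conjTranspose] at h
  have hsymN : hNps.sqrtᵀ = hNps.sqrt := by
    have h := hNps.posSemidef_sqrt.1
    rwa [Matrix.IsHermitian, real_conjTranspose] at h
  have hsymMN : hMNps.sqrtᵀ = hMNps.sqrt := by
    have h := hMNps.posSemidef_sqrt.1
    rwa [Matrix.IsHermitian, real_conjTranspose] at h
  have covPair : (Nᵀ * hMps.sqrt) * (Nᵀ * hMps.sqrt)ᵀ + hNps.sqrt * hNps.sqrtᵀ
      = hMNps.sqrt * hMNps.sqrtᵀ := by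
    rw [Matrix.transpose_mul, Matrix.transpose_transpose, hsymM, hsymN, hsymMN,
      hNps.sqrt_mul_self, hMNps.sqrt_mul_self]
    have e1 : Nᵀ * hMps.sqrt * (hMps.sqrt * N) = Nᵀ * (1 - Mᵀ * M) * N := by
      rw [Matrix.mul_assoc Nᵀ hMps.sqrt (hMps.sqrt * N),
        ← Matrix.mul_assoc hMps.sqrt hMps.sqrt N, hMps.sqrt_mul_self,
        ← Matrix.mul_assoc Nᵀ (1 - Mᵀ * M) N]
    rw [e1, Matrix.transpose_mul]
    simp only [Matrix.mul_sub, Matrix.sub_mul, Matrix.mul_one, Matrix.one_mul,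
      Matrix.mul_assoc]
    abel
  have covPush : ((M * N)ᵀ) * ((M * N)ᵀ)ᵀ + hMNps.sqrt * hMNps.sqrtᵀ
      = (1 : Matrix (Fin q) (Fin q) ℝ) * (1 : Matrix (Fin q) (Fin q) ℝ)ᵀ := by
    rw [Matrix.transpose_transpose, hsymMN, hMNps.sqrt_mul_self, Matrix.transpose_one,
      Matrix.one_mul]
    abel
  have hone : (fun u : Fin q → ℝ => (1 : Matrix (Fin q) (Fin q) ℝ) *ᵥ u) = id := by
    funext u
    rw [Matrix.one_mulVec]
    rfl
  have pushMap1 : ((stdGaussian r).prod (stdGaussian q)).map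
      (fun v : (Fin r → ℝ) × (Fin q → ℝ) => (M * N)ᵀ *ᵥ v.1 + hMNps.sqrt *ᵥ v.2)
      = stdGaussian q := by
    simp only [stdGaussian_eq_gauss]
    rw [map_pushPair _ _ _ covPush, hone, Measure.map_id]
  have pushInner : ((stdGaussian p).prod (stdGaussian q)).map
      (fun v : (Fin p → ℝ) × (Fin q → ℝ) => (Nᵀ * hMps.sqrt) *ᵥ v.1 + hNps.sqrt *ᵥ v.2)
      = (stdGaussian q).map (fun u => hMNps.sqrt *ᵥ u) := by
    simp only [stdGaussian_eq_gauss]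
    exact map_pushPair _ _ _ covPair
  have pushTriple : ((stdGaussian r).prod ((stdGaussian p).prod (stdGaussian q))).map
      (fun t : (Fin r → ℝ) × ((Fin p → ℝ) × (Fin q → ℝ)) =>
        (M * N)ᵀ *ᵥ t.1 + ((Nᵀ * hMps.sqrt) *ᵥ t.2.1 + hNps.sqrt *ᵥ t.2.2))
      = stdGaussian q := by
    simp only [stdGaussian_eq_gauss]
    rw [map_pushTriple _ _ _ _ _ covPair covPush, hone, Measure.map_id]
  have measPair : Measurable (fun v : (Fin r → ℝ) × (Fin q → ℝ) =>
      (M * N)ᵀ *ᵥ v.1 + hMNps.sqrt *ᵥ v.2) :=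
    ((measurable_mulVec _).comp measurable_fst).add
      ((measurable_mulVec _).comp measurable_snd)
  have measInner : Measurable (fun v : (Fin p → ℝ) × (Fin q → ℝ) =>
      (Nᵀ * hMps.sqrt) *ᵥ v.1 + hNps.sqrt *ᵥ v.2) :=
    ((measurable_mulVec _).comp measurable_fst).add
      ((measurable_mulVec _).comp measurable_snd)
  have measTriple : Measurable (fun t : (Fin r → ℝ) × ((Fin p → ℝ) × (Fin q → ℝ)) =>
      (M * N)ᵀ *ᵥ t.1 + ((Nᵀ * hMps.sqrt) *ᵥ t.2.1 + hNps.sqrt *ᵥ t.2.2)) :=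
    ((measurable_mulVec _).comp measurable_fst).add
      (((measurable_mulVec _).comp (measurable_fst.comp measurable_snd)).add
        ((measurable_mulVec _).comp (measurable_snd.comp measurable_snd)))
  have harg : ∀ (z : Fin r → ℝ) (y : Fin p → ℝ) (w : Fin q → ℝ),
      Nᵀ *ᵥ (Mᵀ *ᵥ z + hMps.sqrt *ᵥ y) + hNps.sqrt *ᵥ w
      = (M * N)ᵀ *ᵥ z + ((Nᵀ * hMps.sqrt) *ᵥ y + hNps.sqrt *ᵥ w) := by
    intro z y w
    rw [Matrix.mulVec_add, Matrix.mulVec_mulVec, Matrix.mulVec_mulVec,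
      Matrix.transpose_mul, add_assoc]
  refine ⟨fun f hf => ⟨?_, ?_⟩, fun f hf => ?_⟩
  · -- the averaging identity
    set f' := hf.1.mk f with hf'def
    have hff' : f =ᵐ[stdGaussian q] f' := hf.1.ae_eq_mk
    have hf'sm : StronglyMeasurable f' := hf.1.stronglyMeasurable_mk
    have hint : Integrable f' (stdGaussian q) := (hf.integrable one_le_two).congr hff'
    have haeMN : avg (M * N) f =ᵐ[stdGaussian r] avg (M * N) f' := by
      have h0 : (f ∘ fun v : (Fin r → ℝ) × (Fin q → ℝ) =>
            (M * N)ᵀ *ᵥ v.1 + hMNps.sqrt *ᵥ v.2)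
          =ᵐ[(stdGaussian r).prod (stdGaussian q)]
          (f' ∘ fun v => (M * N)ᵀ *ᵥ v.1 + hMNps.sqrt *ᵥ v.2) :=
        ae_eq_comp measPair.aemeasurable (by rw [pushMap1]; exact hff')
      have h1 := Measure.ae_ae_of_ae_prod h0
      filter_upwards [h1] with z hz
      simp only [avg, dif_pos hMNps]
      exact integral_congr_ae hz
    have haeMN2 : avg M (avg N f) =ᵐ[stdGaussian r] avg M (avg N f') := by
      have h0 : (f ∘ fun t : (Fin r → ℝ) × ((Fin p → ℝ) × (Fin q → ℝ)) =>
            (M * N)ᵀ *ᵥ t.1 + ((Nᵀ * hMps.sqrt) *ᵥ t.2.1 + hNps.sqrt *ᵥ t.2.2))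
          =ᵐ[(stdGaussian r).prod ((stdGaussian p).prod (stdGaussian q))]
          (f' ∘ fun t => (M * N)ᵀ *ᵥ t.1 + ((Nᵀ * hMps.sqrt) *ᵥ t.2.1 + hNps.sqrt *ᵥ t.2.2)) :=
        ae_eq_comp measTriple.aemeasurable (by rw [pushTriple]; exact hff')
      have h1 := Measure.ae_ae_of_ae_prod h0
      filter_upwards [h1] with z hz
      simp only [avg, dif_pos hMps, dif_pos hNps]
      refine integral_congr_ae ?_
      have h2 := Measure.ae_ae_of_ae_prod hz
      filter_upwards [h2] with y hy
      refine integral_congr_ae ?_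
      filter_upwards [hy] with w hw
      simp only [Function.comp_apply] at hw
      rw [← harg z y w] at hw
      exact hw
    have hmain : avg M (avg N f') =ᵐ[stdGaussian r] avg (M * N) f' := by
      have hint3 : Integrable ((f' ∘ fun t : (Fin r → ℝ) × ((Fin p → ℝ) × (Fin q → ℝ)) =>
            (M * N)ᵀ *ᵥ t.1 + ((Nᵀ * hMps.sqrt) *ᵥ t.2.1 + hNps.sqrt *ᵥ t.2.2)))
          ((stdGaussian r).prod ((stdGaussian p).prod (stdGaussian q))) := by
        refine (integrable_map_measure hf'sm.aestronglyMeasurable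
          measTriple.aemeasurable).mp ?_
        rw [pushTriple]
        exact hint
      have hslice := hint3.prod_right_ae
      filter_upwards [hslice] with z hz
      simp only [avg, dif_pos hMps, dif_pos hNps, dif_pos hMNps]
      have hAESM : ∀ μ : Measure (Fin q → ℝ),
          AEStronglyMeasurable (fun x : Fin q → ℝ => f' ((M * N)ᵀ *ᵥ z + x)) μ := fun μ =>
        (hf'sm.comp_measurable (measurable_const_add _)).aestronglyMeasurable
      calc ∫ y, ∫ w, f' (Nᵀ *ᵥ (Mᵀ *ᵥ z + hMps.sqrt *ᵥ y) + hNps.sqrt *ᵥ w)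
              ∂(stdGaussian q) ∂(stdGaussian p)
          = ∫ y, ∫ w, f' ((M * N)ᵀ *ᵥ z + ((Nᵀ * hMps.sqrt) *ᵥ y + hNps.sqrt *ᵥ w))
              ∂(stdGaussian q) ∂(stdGaussian p) := by
            simp only [harg]
        _ = ∫ s, f' ((M * N)ᵀ *ᵥ z + ((Nᵀ * hMps.sqrt) *ᵥ s.1 + hNps.sqrt *ᵥ s.2))
              ∂((stdGaussian p).prod (stdGaussian q)) := integral_integral hz
        _ = ∫ x, f' ((M * N)ᵀ *ᵥ z + x)
              ∂(((stdGaussian p).prod (stdGaussian q)).map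
                (fun v : (Fin p → ℝ) × (Fin q → ℝ) =>
                  (Nᵀ * hMps.sqrt) *ᵥ v.1 + hNps.sqrt *ᵥ v.2)) :=
            (integral_map measInner.aemeasurable (hAESM _)).symm
        _ = ∫ x, f' ((M * N)ᵀ *ᵥ z + x)
              ∂((stdGaussian q).map (fun u => hMNps.sqrt *ᵥ u)) := by rw [pushInner]
        _ = ∫ u, f' ((M * N)ᵀ *ᵥ z + hMNps.sqrt *ᵥ u) ∂(stdGaussian q) :=
            integral_map (measurable_mulVec _).aemeasurable (hAESM _)
    exact haeMN2.trans (hmain.trans haeMN.symm)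
  · -- the changeVar identity
    funext z
    simp [changeVar, Matrix.mulVec_mulVec, Matrix.transpose_mul]
  · -- the isometry case
    have hVps : (1 - Vᵀ * V).PosSemidef := by
      rw [hV, sub_self]
      exact Matrix.PosSemidef.zero
    have hsq0 : hVps.sqrt = 0 := by
      have h1 : hVps.sqrt * hVps.sqrt = 0 := by rw [hVps.sqrt_mul_self, hV, sub_self]
      have h2 : hVps.sqrtᴴ = hVps.sqrt := hVps.posSemidef_sqrt.1
      have h3 : hVps.sqrtᴴ * hVps.sqrt = 0 := by rw [h2]; exact h1
      exact Matrix.conjTranspose_mul_self_eq_zero.mp h3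
    rw [Matrix.PosSemidef.sqrt_def] at hsq0
    refine Filter.Eventually.of_forall fun z => ?_
    simp only [avg, dif_pos hVps, hsq0, Matrix.zero_mulVec, add_zero, changeVar]
    simp

end
end

section
/- Let d be a positive integer and F : ℝ^d → ℝ a continuously differentiable function such that F and all its first-order partial derivatives belong to L²_{γ_d}. Define the gradient Gram matrix G_F := ∫_{ℝ^d} ∇F(x) ∇F(x)ᵀ dγ_d(x) ∈ ℝ^{d×d}. Then: (i) the intrinsic dimension of F equals the rank of G_F, i.e. d(F) = rank(G_F); (ii) if P is the orthogonal projection matrix onto the column space of G_F, then A_P F = F in L²_{γ_d}; (iii) every W ∈ S(d, d(F)) with Π_W F = F has column span equal to the column space of G_F. -/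
open MeasureTheory ProbabilityTheory Filter Matrix

noncomputable section

/-- Intrinsic dimension of `F ∈ L²_{γ_q}`: smallest `p` such that `F` factors through
an orthogonal projection onto a `p`-dimensional subspace (as L² functions). -/
def intrinsicDim {q : ℕ} (F : (Fin q → ℝ) → ℝ) : ℕ :=
  sInf { p : ℕ | ∃ W : Matrix (Fin q) (Fin p) ℝ, Wᵀ * W = 1 ∧
    avg (W * Wᵀ) F =ᵐ[stdGaussian q] F }

/-- The gradient Gram matrix `G_F = ∫ ∇F ∇Fᵀ dγ_d`. -/
def gradGram {d : ℕ} (F : (Fin d → ℝ) → ℝ) : Matrix (Fin d) (Fin d) ℝ :=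
  Matrix.of fun i j =>
    ∫ x, fderiv ℝ F x (Pi.single i 1) * fderiv ℝ F x (Pi.single j 1) ∂(stdGaussian d)

instance (q : ℕ) : IsProbabilityMeasure (stdGaussian q) := by
  unfold _root_.stdGaussian; infer_instance

lemma pi_ac : ∀ (n : ℕ) (μ ν : Fin n → Measure ℝ),
    (∀ i, IsProbabilityMeasure (μ i)) → (∀ i, IsProbabilityMeasure (ν i)) →
    (∀ i, μ i ≪ ν i) → Measure.pi μ ≪ Measure.pi ν := by
  intro n
  induction n with
  | zero =>
    intro μ ν hμ hν h
    haveI := hμ; haveI := hν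
    intro s hs
    rcases s.eq_empty_or_nonempty with rfl | ⟨x, hx⟩
    · simp
    · exfalso
      have hsu : s = Set.univ := Set.eq_univ_iff_forall.2 fun y => by
        rwa [Subsingleton.elim y x]
      rw [hsu] at hs
      simp at hs
  | succ n ih =>
    intro μ ν hμ hν h
    haveI := hμ; haveI := hν
    set e := MeasurableEquiv.piFinSuccAbove (fun _ : Fin (n+1) => ℝ) 0 with he
    have h1 := (measurePreserving_piFinSuccAbove μ 0).symm e
    have h2 := (measurePreserving_piFinSuccAbove ν 0).symm e
    rw [← h1.map_eq, ← h2.map_eq]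
    exact Measure.AbsolutelyContinuous.map
      ((h 0).prod (ih _ _ (fun i => hμ _) (fun i => hν _) (fun i => h _)))
      e.symm.measurable

lemma stdGaussian_map_add (d : ℕ) (c : Fin d → ℝ) :
    (stdGaussian d).map (· + c) = Measure.pi fun i => gaussianReal (c i) 1 := by
  refine (Measure.pi_eq fun s hs => ?_).symm
  have hm : Measurable (fun x : Fin d → ℝ => x + c) :=
    (continuous_id.add continuous_const).measurable
  rw [Measure.map_apply hm (MeasurableSet.univ_pi hs)]
  have hpre : (fun x : Fin d → ℝ => x + c) ⁻¹' (Set.pi Set.univ s)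
      = Set.pi Set.univ (fun i => (· + c i) ⁻¹' (s i)) := by
    ext x; simp [Set.mem_univ_pi, Pi.add_apply]
  rw [hpre, _root_.stdGaussian, Measure.pi_pi]
  refine Finset.prod_congr rfl fun i _ => ?_
  have : (gaussianReal (c i) 1 : Measure ℝ) = (gaussianReal 0 1).map (· + c i) := by
    rw [gaussianReal_map_add_const]; norm_num
  rw [this, Measure.map_apply (measurable_add_const (c i)) (hs i)]

lemma stdGaussian_qmp (d : ℕ) (c : Fin d → ℝ) :
    Measure.QuasiMeasurePreserving (fun x : Fin d → ℝ => x + c)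
      (stdGaussian d) (stdGaussian d) := by
  refine ⟨(continuous_id.add continuous_const).measurable, ?_⟩
  rw [stdGaussian_map_add]
  exact pi_ac d _ _ (fun i => inferInstance) (fun i => inferInstance)
    (fun i => ((gaussianReal_absolutelyContinuous _ one_ne_zero).trans
      (gaussianReal_absolutelyContinuous' _ one_ne_zero)))

instance stdGaussian_openPos (d : ℕ) : (stdGaussian d).IsOpenPosMeasure := by
  refine ⟨fun U hU ⟨x, hx⟩ => ?_⟩
  obtain ⟨I, u, hu, hsub⟩ := (isOpen_pi_iff.1 hU) x hx
  have hbox : Set.pi Set.univ (fun i => if i ∈ I then u i else Set.univ) ⊆ U := by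
    refine subset_trans ?_ hsub
    intro y hy i hi
    have hiI := Finset.mem_coe.1 hi
    simpa [hiI] using hy i (Set.mem_univ i)
  refine fun h0 => ?_
  have : stdGaussian d (Set.pi Set.univ (fun i => if i ∈ I then u i else Set.univ)) = 0 :=
    le_antisymm (le_trans (measure_mono hbox) h0.le) zero_le
  rw [_root_.stdGaussian, Measure.pi_pi] at this
  obtain ⟨i, -, hi0⟩ := Finset.prod_eq_zero_iff.1 this
  by_cases hiI : i ∈ I
  · rw [if_pos hiI] at hi0
    have : (volume : Measure ℝ) (u i) = 0 := gaussianReal_absolutelyContinuous' _ one_ne_zero hi0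
    exact ((hu i hiI).1.measure_ne_zero volume ⟨x i, (hu i hiI).2⟩) this
  · rw [if_neg hiI] at hi0
    simpa using hi0


variable {d : ℕ} {F : (Fin d → ℝ) → ℝ}


lemma cont_dfv (hF1 : ContDiff ℝ 1 F) (v : Fin d → ℝ) :
    Continuous fun x => fderiv ℝ F x v :=
  (hF1.continuous_fderiv one_ne_zero).clm_apply continuous_const

lemma dfv_eq_sum (hF1 : ContDiff ℝ 1 F) (v : Fin d → ℝ) (x : Fin d → ℝ) :
    fderiv ℝ F x v = ∑ i, v i * fderiv ℝ F x (Pi.single i 1) := by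
  have hv : v = ∑ i, v i • (Pi.single i 1 : Fin d → ℝ) := by
    funext j
    simp [Finset.sum_apply, Pi.single_apply, Finset.sum_ite_eq', mul_comm]
  conv_lhs => rw [hv]
  rw [map_sum]
  exact Finset.sum_congr rfl fun i _ => by rw [_root_.map_smul]; rfl

lemma memLp_dfv (hF1 : ContDiff ℝ 1 F)
    (hdF : ∀ i, MemLp (fun x => fderiv ℝ F x (Pi.single i 1)) 2 (stdGaussian d))
    (v : Fin d → ℝ) :
    MemLp (fun x => fderiv ℝ F x v) 2 (stdGaussian d) := by
  have : (fun x => fderiv ℝ F x v)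
      = fun x => ∑ i, v i * fderiv ℝ F x (Pi.single i 1) := by
    funext x; exact dfv_eq_sum hF1 v x
  rw [this]
  have := memLp_finset_sum' (μ := stdGaussian d) Finset.univ
    (f := fun i x => v i * fderiv ℝ F x (Pi.single i 1))
    (fun i _ => (hdF i).const_mul (v i))
  simpa [Finset.sum_fn] using this

lemma integrable_mul_of_memLp2 {f g : (Fin d → ℝ) → ℝ}
    (hf : MemLp f 2 (stdGaussian d)) (hg : MemLp g 2 (stdGaussian d)) :
    Integrable (fun x => f x * g x) (stdGaussian d) := by
  have h1 : Integrable (fun x => (f x + g x) ^ 2) (stdGaussian d) := (hf.add hg).integrable_sq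
  have h2 : Integrable (fun x => f x ^ 2) (stdGaussian d) := hf.integrable_sq
  have h3 : Integrable (fun x => g x ^ 2) (stdGaussian d) := hg.integrable_sq
  have : (fun x => f x * g x)
      = fun x => (2 : ℝ)⁻¹ * (((f x + g x) ^ 2 - f x ^ 2) - g x ^ 2) := by
    funext x; ring
  rw [this]
  exact ((h1.sub h2).sub h3).const_mul _


lemma quad_eq_integral (hF1 : ContDiff ℝ 1 F)
    (hdF : ∀ i, MemLp (fun x => fderiv ℝ F x (Pi.single i 1)) 2 (stdGaussian d))
    (v : Fin d → ℝ) :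
    v ⬝ᵥ (gradGram F *ᵥ v) = ∫ x, (fderiv ℝ F x v) ^ 2 ∂(stdGaussian d) := by
  have hmul : ∀ i j : Fin d, Integrable
      (fun x => v i * fderiv ℝ F x (Pi.single i 1) * (v j * fderiv ℝ F x (Pi.single j 1)))
      (stdGaussian d) := fun i j =>
    integrable_mul_of_memLp2 ((hdF i).const_mul (v i)) ((hdF j).const_mul (v j))
  have hrhs : ∫ x, (fderiv ℝ F x v) ^ 2 ∂(stdGaussian d)
      = ∑ i, ∑ j, ∫ x, (v i * fderiv ℝ F x (Pi.single i 1)) *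
          (v j * fderiv ℝ F x (Pi.single j 1)) ∂(stdGaussian d) := by
    have hpt : ∀ x, (fderiv ℝ F x v) ^ 2
        = ∑ i, ∑ j, (v i * fderiv ℝ F x (Pi.single i 1)) *
            (v j * fderiv ℝ F x (Pi.single j 1)) := by
      intro x
      rw [sq, dfv_eq_sum hF1 v x, Finset.sum_mul_sum]
    simp_rw [hpt]
    rw [integral_finset_sum _ (fun i _ => integrable_finset_sum _ (fun j _ => hmul i j))]
    exact Finset.sum_congr rfl fun i _ => integral_finset_sum _ (fun j _ => hmul i j)
  rw [hrhs]
  simp only [dotProduct, mulVec, gradGram, Matrix.of_apply]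
  refine Finset.sum_congr rfl fun i _ => ?_
  rw [Finset.mul_sum]
  refine Finset.sum_congr rfl fun j _ => ?_
  have hfun : (fun x => (v i * fderiv ℝ F x (Pi.single i 1)) *
      (v j * fderiv ℝ F x (Pi.single j 1)))
      = fun x => (v i * v j) * (fderiv ℝ F x (Pi.single i 1) * fderiv ℝ F x (Pi.single j 1)) := by
    funext x; ring
  rw [hfun, integral_const_mul]
  ring

lemma dfv_zero_of_quad_zero (hF1 : ContDiff ℝ 1 F)
    (hdF : ∀ i, MemLp (fun x => fderiv ℝ F x (Pi.single i 1)) 2 (stdGaussian d))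
    (v : Fin d → ℝ) (h0 : v ⬝ᵥ (gradGram F *ᵥ v) = 0) :
    ∀ x, fderiv ℝ F x v = 0 := by
  have hq := quad_eq_integral hF1 hdF v
  rw [h0] at hq
  have hInt : Integrable (fun x => (fderiv ℝ F x v) ^ 2) (stdGaussian d) :=
    (memLp_dfv hF1 hdF v).integrable_sq
  have hae : (fun x => (fderiv ℝ F x v) ^ 2) =ᵐ[stdGaussian d] 0 :=
    (integral_eq_zero_iff_of_nonneg (fun x => sq_nonneg _) hInt).1 hq.symm
  have heq : (fun x => (fderiv ℝ F x v) ^ 2) = (0 : (Fin d → ℝ) → ℝ) :=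
    Measure.eq_of_ae_eq hae ((cont_dfv hF1 v).pow 2) continuous_const
  intro x
  have := congrFun heq x
  exact sq_eq_zero_iff.1 this

lemma hasDerivAt_line (hF1 : ContDiff ℝ 1 F) (x v : Fin d → ℝ) (s : ℝ) :
    HasDerivAt (fun s : ℝ => F (x + s • v)) (fderiv ℝ F (x + s • v) v) s := by
  have hc : HasDerivAt (fun s : ℝ => x + s • v) v s := by
    simpa using ((hasDerivAt_id s).smul_const v).const_add x
  exact (hF1.differentiable one_ne_zero _).hasFDerivAt.comp_hasDerivAt s hc

lemma const_along (hF1 : ContDiff ℝ 1 F) {v : Fin d → ℝ}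
    (hv : ∀ x, fderiv ℝ F x v = 0) : ∀ (x : Fin d → ℝ) (t : ℝ), F (x + t • v) = F x := by
  intro x t
  have hconst : ∀ s, deriv (fun s : ℝ => F (x + s • v)) s = 0 := fun s => by
    rw [(hasDerivAt_line hF1 x v s).deriv, hv]
  have := is_const_of_deriv_eq_zero
    (fun s => (hasDerivAt_line hF1 x v s).differentiableAt) hconst t 0
  simpa using this

lemma gradGram_mulVec_zero (hF1 : ContDiff ℝ 1 F)
    (hdF : ∀ i, MemLp (fun x => fderiv ℝ F x (Pi.single i 1)) 2 (stdGaussian d))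
    {v : Fin d → ℝ} (hv : ∀ x, fderiv ℝ F x v = 0) :
    gradGram F *ᵥ v = 0 := by
  funext i
  show ∑ j, gradGram F i j * v j = 0
  have h1 : ∀ j : Fin d, gradGram F i j * v j
      = ∫ x, (fderiv ℝ F x (Pi.single i 1) * fderiv ℝ F x (Pi.single j 1)) * v j
          ∂(stdGaussian d) := fun j => (integral_mul_const _ _).symm
  simp_rw [h1]
  rw [← integral_finset_sum _ (fun j _ =>
    (integrable_mul_of_memLp2 (hdF i) (hdF j)).mul_const (v j))]
  have hpt : ∀ x : Fin d → ℝ,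
      (∑ j, (fderiv ℝ F x (Pi.single i 1) * fderiv ℝ F x (Pi.single j 1)) * v j) = 0 := by
    intro x
    have : (∑ j, (fderiv ℝ F x (Pi.single i 1) * fderiv ℝ F x (Pi.single j 1)) * v j)
        = fderiv ℝ F x (Pi.single i 1) * ∑ j, v j * fderiv ℝ F x (Pi.single j 1) := by
      rw [Finset.mul_sum]; exact Finset.sum_congr rfl fun j _ => by ring
    rw [this, ← dfv_eq_sum hF1 v x, hv, mul_zero]
  simp_rw [hpt]
  exact integral_zero _ _


variable {P : Matrix (Fin d) (Fin d) ℝ}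


lemma one_sub_proj_eq (hsym : Pᵀ = P) (hidem : P * P = P) :
    (1 - P)ᴴ * (1 - P) = 1 - Pᵀ * P := by
  have hPP : Pᵀ * P = P := by rw [hsym, hidem]
  rw [hPP, conjTranspose_eq_transpose_of_trivial, transpose_sub, transpose_one, hsym]
  simp only [sub_mul, mul_sub, one_mul, mul_one, hidem]
  abel

lemma one_sub_mul_self (hsym : Pᵀ = P) (hidem : P * P = P) :
    (1 - P) * (1 - P) = 1 - Pᵀ * P := by
  have h := one_sub_proj_eq hsym hidem
  rw [conjTranspose_eq_transpose_of_trivial, transpose_sub, transpose_one, hsym] at h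
  rw [h, hidem, hsym, hidem]

lemma posSemidef_one_sub_proj (hsym : Pᵀ = P) (hidem : P * P = P) :
    (1 - Pᵀ * P).PosSemidef := by
  rw [← one_sub_proj_eq hsym hidem]
  exact posSemidef_conjTranspose_mul_self (1 - P)

lemma sqrt_one_sub_proj (hsym : Pᵀ = P) (hidem : P * P = P)
    (h : (1 - Pᵀ * P).PosSemidef) :
    h.1.eigenvectorUnitary.1 * diagonal (fun i => Real.sqrt (h.1.eigenvalues i)) *
      (star h.1.eigenvectorUnitary : Matrix (Fin d) (Fin d) ℝ) = 1 - P := by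
  have hAeq : 1 - Pᵀ * P = 1 - P := by rw [hsym, hidem]
  have hA2 : (1 - Pᵀ * P) * (1 - Pᵀ * P) = 1 - Pᵀ * P := by
    rw [hAeq, one_sub_mul_self hsym hidem, hAeq]
  set U : Matrix (Fin d) (Fin d) ℝ := h.1.eigenvectorUnitary.1 with hUdef
  set V : Matrix (Fin d) (Fin d) ℝ := (star h.1.eigenvectorUnitary : Matrix (Fin d) (Fin d) ℝ)
    with hVdef
  have hUV : U * V = 1 := Unitary.coe_mul_star_self _
  have hVU : V * U = 1 := by
    have := Unitary.coe_mul_star_self (star h.1.eigenvectorUnitary)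
    rwa [star_star] at this
  set D : Matrix (Fin d) (Fin d) ℝ := diagonal (RCLike.ofReal ∘ h.1.eigenvalues) with hDdef
  have hspec : 1 - Pᵀ * P = U * D * V := h.1.spectral_theorem
  have hD : V * (1 - Pᵀ * P) * U = D := by
    rw [hspec, ← Matrix.mul_assoc, ← Matrix.mul_assoc, hVU, Matrix.one_mul, Matrix.mul_assoc,
      hVU, Matrix.mul_one]
  have hDD : D * D = D := by
    rw [← hD]
    calc V * (1 - Pᵀ * P) * U * (V * (1 - Pᵀ * P) * U)
        = V * (1 - Pᵀ * P) * (U * V) * (1 - Pᵀ * P) * U := by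
          simp only [Matrix.mul_assoc]
      _ = V * (1 - Pᵀ * P) * U := by
          rw [hUV, Matrix.mul_one, Matrix.mul_assoc V, hA2]
  have hev : ∀ i, Real.sqrt (h.1.eigenvalues i) = h.1.eigenvalues i := by
    intro i
    have := congrFun (congrFun hDD i) i
    simp only [hDdef, diagonal_mul_diagonal, diagonal_apply_eq, Function.comp_apply,
      RCLike.ofReal_real_eq_id, id] at this
    have h01 : h.1.eigenvalues i = 0 ∨ h.1.eigenvalues i = 1 := by
      have : h.1.eigenvalues i * (h.1.eigenvalues i - 1) = 0 := by linarith
      rcases mul_eq_zero.1 this with h0 | h1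
      · exact Or.inl h0
      · exact Or.inr (by linarith)
    rcases h01 with h0 | h1
    · rw [h0, Real.sqrt_zero]
    · rw [h1, Real.sqrt_one]
  have hdiag : diagonal (fun i => Real.sqrt (h.1.eigenvalues i)) = D := by
    rw [hDdef]
    congr 1
    funext i
    simp [hev i, RCLike.ofReal_real_eq_id]
  rw [hdiag, ← hspec, hAeq]

lemma avg_proj_apply (hsym : Pᵀ = P) (hidem : P * P = P) (F : (Fin d → ℝ) → ℝ) :
    avg P F = fun z => ∫ y, F (P *ᵥ z + (1 - P) *ᵥ y) ∂(stdGaussian d) := by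
  have h := posSemidef_one_sub_proj hsym hidem
  rw [avg, dif_pos h, sqrt_one_sub_proj hsym hidem h]
  funext z
  rw [hsym]

lemma avg_eq_self_of_const (hsym : Pᵀ = P) (hidem : P * P = P)
    (hdir : ∀ v : Fin d → ℝ, P *ᵥ v = 0 → ∀ x, F (x + v) = F x) :
    avg P F = F := by
  rw [avg_proj_apply hsym hidem]
  funext z
  have hker : ∀ y : Fin d → ℝ, P *ᵥ ((1 - P) *ᵥ y) = 0 := by
    intro y
    rw [mulVec_mulVec, mul_sub, mul_one, hidem, sub_self, zero_mulVec]
  have h1 : ∀ y : Fin d → ℝ, F (P *ᵥ z + (1 - P) *ᵥ y) = F (P *ᵥ z) := fun y =>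
    hdir _ (hker y) (P *ᵥ z)
  simp_rw [h1]
  rw [integral_const]
  simp only [measure_univ, ENNReal.toReal_one, probReal_univ, smul_eq_mul, one_smul, one_mul]
  have hz : P *ᵥ z + (1 - P) *ᵥ z = z := by
    rw [sub_mulVec, one_mulVec]; abel
  conv_rhs => rw [← hz]
  exact (hdir _ (hker z) (P *ᵥ z)).symm


lemma invariant_of_avg (hF1 : ContDiff ℝ 1 F) (hsym : Pᵀ = P) (hidem : P * P = P)
    (havg : avg P F =ᵐ[stdGaussian d] F) {v : Fin d → ℝ} (hv : P *ᵥ v = 0) :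
    ∀ x, fderiv ℝ F x v = 0 := by
  set A := avg P F with hAdef
  have hA : A = fun z => ∫ y, F (P *ᵥ z + (1 - P) *ᵥ y) ∂(stdGaussian d) :=
    avg_proj_apply hsym hidem F
  have htran : ∀ (t : ℝ) (z : Fin d → ℝ), A (z + t • v) = A z := by
    intro t z
    rw [hA]
    simp only
    have : P *ᵥ (z + t • v) = P *ᵥ z := by
      rw [mulVec_add, mulVec_smul, hv, smul_zero, add_zero]
    rw [this]
  have key : ∀ t : ℝ, (fun x => F (x + t • v)) = F := by
    intro t
    have h1 : (fun x => F (x + t • v)) =ᵐ[stdGaussian d] (fun x => A (x + t • v)) :=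
      (stdGaussian_qmp d (t • v)).ae_eq havg.symm
    have h2 : (fun x : Fin d → ℝ => A (x + t • v)) = A := funext fun z => htran t z
    have h2' : (fun x : Fin d → ℝ => A (x + t • v)) =ᵐ[stdGaussian d] F := by
      rw [h2]; exact havg
    have h3 : (fun x => F (x + t • v)) =ᵐ[stdGaussian d] F := h1.trans h2'
    exact Measure.eq_of_ae_eq h3
      (hF1.continuous.comp (continuous_id.add continuous_const)) hF1.continuous
  intro x
  have hc : ∀ t : ℝ, F (x + t • v) = F x := fun t => by
    simpa using congrFun (key t) x
  have h1 : HasDerivAt (fun t : ℝ => F (x + t • v)) (fderiv ℝ F (x + (0:ℝ) • v) v) 0 :=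
    hasDerivAt_line hF1 x v 0
  have h2 : (fun t : ℝ => F (x + t • v)) = fun _ => F x := funext hc
  rw [h2] at h1
  have h4 := h1.unique (hasDerivAt_const 0 (F x))
  simpa using h4


lemma gradGram_symm (F : (Fin d → ℝ) → ℝ) : (gradGram F)ᵀ = gradGram F := by
  ext i j
  show (∫ x, fderiv ℝ F x (Pi.single j 1) * fderiv ℝ F x (Pi.single i 1) ∂(stdGaussian d)) = _
  simp_rw [mul_comm]
  rfl

lemma wwT_symm {p : ℕ} (W : Matrix (Fin d) (Fin p) ℝ) : (W * Wᵀ)ᵀ = W * Wᵀ := by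
  rw [transpose_mul, transpose_transpose]

lemma wwT_idem {p : ℕ} {W : Matrix (Fin d) (Fin p) ℝ} (hW : Wᵀ * W = 1) :
    (W * Wᵀ) * (W * Wᵀ) = W * Wᵀ := by
  rw [Matrix.mul_assoc, ← Matrix.mul_assoc Wᵀ, hW, Matrix.one_mul]

lemma range_wwT {p : ℕ} {W : Matrix (Fin d) (Fin p) ℝ} (hW : Wᵀ * W = 1) :
    LinearMap.range (W * Wᵀ).mulVecLin = LinearMap.range W.mulVecLin := by
  apply le_antisymm
  · rintro _ ⟨x, rfl⟩
    refine ⟨Wᵀ *ᵥ x, ?_⟩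
    show W *ᵥ (Wᵀ *ᵥ x) = (W * Wᵀ) *ᵥ x
    rw [mulVec_mulVec]
  · rintro _ ⟨x, rfl⟩
    refine ⟨W *ᵥ x, ?_⟩
    show (W * Wᵀ) *ᵥ (W *ᵥ x) = W *ᵥ x
    rw [mulVec_mulVec, Matrix.mul_assoc, hW, Matrix.mul_one]

/-- Part (ii) core: the projection onto `range G` fixes `F` pointwise. -/
lemma avg_fix (hF1 : ContDiff ℝ 1 F)
    (hdF : ∀ i, MemLp (fun x => fderiv ℝ F x (Pi.single i 1)) 2 (stdGaussian d))
    {P : Matrix (Fin d) (Fin d) ℝ} (hsym : Pᵀ = P) (hidem : P * P = P)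
    (hrange : LinearMap.range P.mulVecLin = LinearMap.range (gradGram F).mulVecLin) :
    avg P F = F := by
  apply avg_eq_self_of_const hsym hidem
  intro v hv x
  have hGv : gradGram F *ᵥ v ∈ LinearMap.range P.mulVecLin := by
    rw [hrange]; exact ⟨v, rfl⟩
  obtain ⟨u, hu⟩ := hGv
  have hquad : v ⬝ᵥ (gradGram F *ᵥ v) = 0 := by
    rw [← hu, mulVecLin_apply, dotProduct_mulVec, ← hsym, vecMul_transpose, hv,
      zero_dotProduct]
  have h0 := dfv_zero_of_quad_zero hF1 hdF v hquad
  simpa using const_along hF1 h0 x 1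

lemma ker_le_ker (hF1 : ContDiff ℝ 1 F)
    (hdF : ∀ i, MemLp (fun x => fderiv ℝ F x (Pi.single i 1)) 2 (stdGaussian d))
    {p : ℕ} {W : Matrix (Fin d) (Fin p) ℝ} (hW : Wᵀ * W = 1)
    (havg : avg (W * Wᵀ) F =ᵐ[stdGaussian d] F) :
    ∀ v, (W * Wᵀ) *ᵥ v = 0 → gradGram F *ᵥ v = 0 := fun v hv =>
  gradGram_mulVec_zero hF1 hdF
    (invariant_of_avg hF1 (wwT_symm W) (wwT_idem hW) havg hv)

lemma rank_le_of_mem (hF1 : ContDiff ℝ 1 F)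
    (hdF : ∀ i, MemLp (fun x => fderiv ℝ F x (Pi.single i 1)) 2 (stdGaussian d))
    {p : ℕ} {W : Matrix (Fin d) (Fin p) ℝ} (hW : Wᵀ * W = 1)
    (havg : avg (W * Wᵀ) F =ᵐ[stdGaussian d] F) :
    (gradGram F).rank ≤ p := by
  have hker := ker_le_ker hF1 hdF hW havg
  have hk : LinearMap.ker (W * Wᵀ).mulVecLin ≤ LinearMap.ker (gradGram F).mulVecLin := by
    intro v hv
    rw [LinearMap.mem_ker] at hv ⊢
    exact hker v hv
  have h1 := LinearMap.finrank_range_add_finrank_ker (gradGram F).mulVecLin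
  have h2 := LinearMap.finrank_range_add_finrank_ker (W * Wᵀ).mulVecLin
  have h3 : Module.finrank ℝ (LinearMap.ker (W * Wᵀ).mulVecLin)
      ≤ Module.finrank ℝ (LinearMap.ker (gradGram F).mulVecLin) :=
    Submodule.finrank_mono hk
  have hrP : (W * Wᵀ).rank ≤ p := le_trans (rank_mul_le_left W Wᵀ) (rank_le_width W)
  have e1 : (gradGram F).rank = Module.finrank ℝ (LinearMap.range (gradGram F).mulVecLin) := rfl
  have e2 : (W * Wᵀ).rank = Module.finrank ℝ (LinearMap.range (W * Wᵀ).mulVecLin) := rfl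
  omega

lemma rank_w {p : ℕ} {W : Matrix (Fin d) (Fin p) ℝ} (hW : Wᵀ * W = 1) : W.rank = p := by
  refine le_antisymm (rank_le_width W) ?_
  have h1 : (Wᵀ * W).rank ≤ W.rank := rank_mul_le_right Wᵀ W
  rwa [hW, rank_one, Fintype.card_fin] at h1

/-- Part (iii) core. -/
lemma range_eq_of_frame (hF1 : ContDiff ℝ 1 F)
    (hdF : ∀ i, MemLp (fun x => fderiv ℝ F x (Pi.single i 1)) 2 (stdGaussian d))
    {p : ℕ} (hp : p = (gradGram F).rank) {W : Matrix (Fin d) (Fin p) ℝ} (hW : Wᵀ * W = 1)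
    (havg : avg (W * Wᵀ) F =ᵐ[stdGaussian d] F) :
    LinearMap.range W.mulVecLin = LinearMap.range (gradGram F).mulVecLin := by
  have hker := ker_le_ker hF1 hdF hW havg
  have hGsym := gradGram_symm F
  set P := W * Wᵀ with hP
  have hidem : P * P = P := wwT_idem hW
  have hsub : LinearMap.range (gradGram F).mulVecLin ≤ LinearMap.range W.mulVecLin := by
    rintro _ ⟨u, rfl⟩
    set g : Fin d → ℝ := gradGram F *ᵥ u with hg
    set w : Fin d → ℝ := (1 - P) *ᵥ g with hwdef
    have hPw : P *ᵥ w = 0 := by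
      rw [hwdef, mulVec_mulVec, mul_sub, mul_one, hidem, sub_self, zero_mulVec]
    have hGw : gradGram F *ᵥ w = 0 := hker w hPw
    have hsplit : w = g - P *ᵥ g := by rw [hwdef, sub_mulVec, one_mulVec]
    have hw0 : w = 0 := by
      have h1 : w ⬝ᵥ g = 0 := by
        rw [hg, dotProduct_mulVec, ← gradGram_symm F, vecMul_transpose, hGw,
          zero_dotProduct]
      have h2 : w ⬝ᵥ (P *ᵥ g) = 0 := by
        rw [dotProduct_mulVec, hP, ← wwT_symm W, vecMul_transpose, ← hP, hPw,
          zero_dotProduct]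
      have hww : w ⬝ᵥ w = w ⬝ᵥ (g - P *ᵥ g) := by rw [← hsplit]
      rw [dotProduct_sub, h1, h2, sub_zero] at hww
      exact dotProduct_self_eq_zero.1 hww
    have hfix : P *ᵥ g = g := by
      have h4 : g - P *ᵥ g = 0 := by rw [← hsplit, hw0]
      exact (sub_eq_zero.1 h4).symm
    refine ⟨Wᵀ *ᵥ g, ?_⟩
    show W *ᵥ (Wᵀ *ᵥ g) = (gradGram F).mulVecLin u
    rw [mulVec_mulVec, ← hP, hfix]
    rfl
  have hrW : Module.finrank ℝ (LinearMap.range W.mulVecLin) = p := rank_w hW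
  have hrG : Module.finrank ℝ (LinearMap.range (gradGram F).mulVecLin) = (gradGram F).rank := rfl
  exact (Submodule.eq_of_le_of_finrank_eq hsub (by rw [hrW, hrG, hp])).symm


open Module in
lemma exists_frame (F : (Fin d → ℝ) → ℝ) :
    ∃ W : Matrix (Fin d) (Fin ((gradGram F).rank)) ℝ, Wᵀ * W = 1 ∧
      LinearMap.range W.mulVecLin = LinearMap.range (gradGram F).mulVecLin := by
  classical
  set G := gradGram F with hG
  set R : Submodule ℝ (Fin d → ℝ) := LinearMap.range G.mulVecLin with hR
  let ε : EuclideanSpace ℝ (Fin d) ≃ₗ[ℝ] (Fin d → ℝ) := WithLp.linearEquiv 2 ℝ _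
  set V : Submodule ℝ (EuclideanSpace ℝ (Fin d)) := R.comap (ε : _ →ₗ[ℝ] _) with hV
  have hVmap : V = R.map (ε.symm : _ →ₗ[ℝ] _) := Submodule.comap_equiv_eq_map_symm _ R
  have hn : finrank ℝ V = G.rank := by
    rw [hVmap]
    exact LinearEquiv.finrank_map_eq ε.symm R
  let b := stdOrthonormalBasis ℝ V
  let vecs : Fin G.rank → (Fin d → ℝ) :=
    fun j => ε ((b (Fin.cast hn.symm j) : EuclideanSpace ℝ (Fin d)))
  have hortho : ∀ j k, vecs j ⬝ᵥ vecs k = if j = k then 1 else 0 := by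
    intro j k
    have h1 := (orthonormal_iff_ite.1 b.orthonormal) (Fin.cast hn.symm j) (Fin.cast hn.symm k)
    have h2 : (inner ℝ (b (Fin.cast hn.symm j)) (b (Fin.cast hn.symm k)) : ℝ)
        = vecs j ⬝ᵥ vecs k := by
      rw [Submodule.coe_inner, PiLp.inner_apply]
      simp only [RCLike.inner_apply, conj_trivial]
      simp_rw [mul_comm ((↑(b (Fin.cast hn.symm k)) : EuclideanSpace ℝ (Fin d)).ofLp _)]
      rfl
    rw [h2] at h1
    rw [h1]
    by_cases h : j = k
    · subst h; simp
    · have : Fin.cast hn.symm j ≠ Fin.cast hn.symm k := by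
        simpa [Fin.ext_iff] using (by simpa [Fin.ext_iff] using h : (j : ℕ) ≠ k)
      simp [h, this]
  refine ⟨(Matrix.of vecs)ᵀ, ?_, ?_⟩
  · ext j k
    have : ((Matrix.of vecs)ᵀᵀ * (Matrix.of vecs)ᵀ) j k = vecs j ⬝ᵥ vecs k := by
      simp [Matrix.mul_apply, dotProduct]
    rw [this, hortho j k]
    simp [Matrix.one_apply]
  · rw [Matrix.range_mulVecLin]
    have hrange : Set.range (Matrix.of vecs)ᵀ.col = Set.range vecs := rfl
    rw [hrange]
    have h1 : Set.range vecs = ε '' (Subtype.val '' Set.range b) := by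
      ext x
      constructor
      · rintro ⟨j, rfl⟩
        exact ⟨_, ⟨_, ⟨_, rfl⟩, rfl⟩, rfl⟩
      · rintro ⟨y, ⟨z, ⟨i, rfl⟩, rfl⟩, rfl⟩
        exact ⟨Fin.cast hn i, by simp [vecs]⟩
    rw [h1, ← Set.image_comp]
    have hspanb : Submodule.span ℝ (Set.range ⇑b) = (⊤ : Submodule ℝ V) := by
      rw [← b.coe_toBasis]; exact b.toBasis.span_eq
    have hcomp : (⇑ε ∘ (Subtype.val : V → EuclideanSpace ℝ (Fin d)))
        = ⇑((ε : EuclideanSpace ℝ (Fin d) →ₗ[ℝ] (Fin d → ℝ)).comp V.subtype) := rfl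
    rw [hcomp, Submodule.span_image, hspanb, Submodule.map_comp, Submodule.map_top,
      Submodule.range_subtype]
    exact (Submodule.map_symm_eq_iff ε).1 hVmap.symm

/-- The support and intrinsic dimension of `F` are determined by the gradient Gram
matrix: `d(F) = rank(G_F)`, the orthogonal projection onto `range(G_F)` fixes `F`,
and any Stiefel frame supporting `F` spans `range(G_F)`. -/
theorem intrinsicDim_eq_rank_gradGram {d : ℕ} (hd : 0 < d) (F : (Fin d → ℝ) → ℝ)
    (hF1 : ContDiff ℝ 1 F) (hF : MemLp F 2 (stdGaussian d))
    (hdF : ∀ i, MemLp (fun x => fderiv ℝ F x (Pi.single i 1)) 2 (stdGaussian d)) :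
    intrinsicDim F = (gradGram F).rank ∧
    (∀ P : Matrix (Fin d) (Fin d) ℝ, Pᵀ = P → P * P = P →
      LinearMap.range P.mulVecLin = LinearMap.range (gradGram F).mulVecLin →
      avg P F =ᵐ[stdGaussian d] F) ∧
    (∀ W : Matrix (Fin d) (Fin (intrinsicDim F)) ℝ, Wᵀ * W = 1 →
      avg (W * Wᵀ) F =ᵐ[stdGaussian d] F →
      LinearMap.range W.mulVecLin = LinearMap.range (gradGram F).mulVecLin) := by
  classical
  obtain ⟨W0, hW0, hrange0⟩ := exists_frame F
  have hrangeP0 : LinearMap.range (W0 * W0ᵀ).mulVecLin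
      = LinearMap.range (gradGram F).mulVecLin := by
    rw [range_wwT hW0, hrange0]
  have hmem : (gradGram F).rank ∈ {p : ℕ | ∃ W : Matrix (Fin d) (Fin p) ℝ, Wᵀ * W = 1 ∧
      avg (W * Wᵀ) F =ᵐ[stdGaussian d] F} := by
    refine ⟨W0, hW0, ?_⟩
    rw [avg_fix hF1 hdF (wwT_symm W0) (wwT_idem hW0) hrangeP0]
  have hi : intrinsicDim F = (gradGram F).rank := by
    refine le_antisymm (Nat.sInf_le hmem) ?_
    refine le_csInf ⟨_, hmem⟩ ?_
    rintro p ⟨W, hW, havg⟩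
    exact rank_le_of_mem hF1 hdF hW havg
  refine ⟨hi, ?_, ?_⟩
  · intro P hsym hidem hrange
    rw [avg_fix hF1 hdF hsym hidem hrange]
  · intro W hW havg
    exact range_eq_of_frame hF1 hdF hi hW havg

end
end

section
/- For every integer N ≥ 3 there exists a function Z : ℤ/Nℤ → ℝ that is even (Z(−j) = Z(j) for all j ∈ ℤ/Nℤ) and such that for every k ∈ ℤ/Nℤ with k ≠ 0 and k + k ≠ 0, the cyclic autocorrelation and self-convolution of Z at k satisfy φ_Z(k) = φ̄_Z(k) < 0. -/
/-- Lemma 4.5: for every `N ≥ 3` there is an even sequence `Z : ℤ/N → ℝ` whose cyclic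
autocorrelation `φ_Z` and self-convolution `φ̄_Z` agree and are negative at every
`k ≠ 0` with `k + k ≠ 0`. -/
theorem exists_nearly_negative_autocorrelation (N : ℕ) [NeZero N] (hN : 3 ≤ N) :
    ∃ Z : ZMod N → ℝ,
      (∀ j : ZMod N, Z (-j) = Z j) ∧
      ∀ k : ZMod N, k ≠ 0 → k + k ≠ 0 →
        (∑ l : ZMod N, Z l * Z (l + k)) = (∑ l : ZMod N, Z l * Z (k - l)) ∧
        (∑ l : ZMod N, Z l * Z (l + k)) < 0 := by
  set c : ℝ := (N : ℝ)⁻¹ with hc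
  have hNpos : (0 : ℝ) < (N : ℝ) := by
    have : 0 < N := Nat.lt_of_lt_of_le (by norm_num) hN
    exact_mod_cast this
  set A : ZMod N → ℝ := fun j => if j = 0 then 1 else 0 with hA
  refine ⟨fun j => A j - c, ?_, ?_⟩
  · intro j
    simp [hA, neg_eq_zero]
  · intro k hk hk2
    have heven : ∀ j : ZMod N, A (-j) - c = A j - c := by
      intro j; simp [hA, neg_eq_zero]
    have heq : (∑ l : ZMod N, (A l - c) * (A (l + k) - c))
        = ∑ l : ZMod N, (A l - c) * (A (k - l) - c) := by
      refine Fintype.sum_equiv (Equiv.neg (ZMod N)) _ _ ?_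
      intro l
      simp only [Equiv.neg_apply]
      have h1 : A (-l) = A l := by simp [hA, neg_eq_zero]
      rw [h1, show k - -l = l + k by ring]
    refine ⟨heq, ?_⟩
    have hsumA : (∑ l : ZMod N, A l) = 1 := by
      simp [hA]
    have hsumAk : (∑ l : ZMod N, A (l + k)) = 1 := by
      rw [← hsumA]
      exact Fintype.sum_equiv (Equiv.addRight k) _ _ (fun l => rfl)
    have hcross : (∑ l : ZMod N, A l * A (l + k)) = 0 := by
      apply Finset.sum_eq_zero
      intro l _
      by_cases h : l = 0
      · simp [hA, h, hk]
      · simp [hA, h]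
    have hexp : (∑ l : ZMod N, (A l - c) * (A (l + k) - c))
        = (∑ l : ZMod N, A l * A (l + k)) - c * (∑ l : ZMod N, A (l + k))
          - c * (∑ l : ZMod N, A l) + (N : ℝ) * c ^ 2 := by
      rw [Finset.mul_sum, Finset.mul_sum, ← Finset.sum_sub_distrib,
        ← Finset.sum_sub_distrib]
      have hcard : ((N : ℝ) * c ^ 2) = ∑ _l : ZMod N, c ^ 2 := by
        rw [Finset.sum_const, Finset.card_univ, ZMod.card, nsmul_eq_mul]
      rw [hcard, ← Finset.sum_add_distrib]
      apply Finset.sum_congr rfl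
      intro l _
      ring
    rw [hexp, hcross, hsumA, hsumAk]
    have : (N : ℝ) * c ^ 2 = c := by
      rw [hc, sq, ← mul_assoc, mul_inv_cancel₀ hNpos.ne', one_mul]
    rw [this]
    have hcpos : 0 < c := by positivity
    linarith
end

section
/- Let N be a positive integer, s an even positive integer, Z : ℤ/Nℤ → ℝ, and θ ∈ ℝ. Set w_j = (cos(2πj/N), sin(2πj/N)) ∈ ℝ² for j ∈ ℤ/Nℤ, and g_Z(x) = Σ_{j=0}^{N−1} Z(j) · h_s(w_j · x) for x ∈ ℝ². Let R_θ = [[cos θ, −sin θ], [sin θ, cos θ]] and A = diag(1, −1). Then: (i) ∫_{ℝ²} g_Z(R_θᵀ x) g_Z(x) dγ_2(x) = Σ_{l=0}^{N−1} φ_Z(l) · cos(2πl/N − θ)^s, where φ_Z(l) = Σ_{j∈ℤ/Nℤ} Z(j) Z(j + l); (ii) ∫_{ℝ²} g_Z((A R_θ)ᵀ x) g_Z(x) dγ_2(x) = Σ_{k=0}^{N−1} φ̄_Z(k) · cos(2πk/N + θ)^s, where φ̄_Z(k) = Σ_{l∈ℤ/Nℤ} Z(l) Z(k − l). -/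
open MeasureTheory ProbabilityTheory Matrix

noncomputable section

/-- Normalized probabilists' Hermite function `h_k = He_k / √(k!)`. -/
def hermiteFn (k : ℕ) (x : ℝ) : ℝ :=
  (Polynomial.aeval x (Polynomial.hermite k)) / Real.sqrt (Nat.factorial k)

namespace Fact44

open Polynomial Real Filter

/-- real hermite polynomial -/
def Hr (n : ℕ) : ℝ[X] := (Polynomial.hermite n).map (Int.castRingHom ℝ)

lemma Hr_zero : Hr 0 = 1 := by simp [Hr]

lemma Hr_succ (n : ℕ) : Hr (n + 1) = X * Hr n - derivative (Hr n) := by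
  simp [Hr, hermite_succ, Polynomial.derivative_map]

lemma aeval_hermite_eq (x : ℝ) (n : ℕ) :
    (Polynomial.aeval x (Polynomial.hermite n)) = (Hr n).eval x := by
  rw [Hr, Polynomial.aeval_def, Polynomial.eval₂_eq_eval_map]
  norm_num

lemma derivative_Hr (n : ℕ) : derivative (Hr n) = (n : ℝ[X]) * Hr (n - 1) := by
  induction n with
  | zero => simp [Hr_zero]
  | succ n ih =>
    rw [Hr_succ, derivative_sub, derivative_mul, derivative_X, ih, Nat.add_sub_cancel]
    cases n with
    | zero => simp [Hr_zero]
    | succ m =>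
      rw [Nat.add_sub_cancel] at *
      have hd : derivative ((((m+1:ℕ)) : ℝ[X]) * Hr m) = ((m+1:ℕ) : ℝ[X]) * derivative (Hr m) := by
        simp
      rw [hd, Hr_succ m]
      push_cast
      ring


lemma integrable_pow_gauss (n : ℕ) :
    Integrable (fun x : ℝ => x ^ n * Real.exp (-(1/2) * x^2)) := by
  have h := integrable_rpow_mul_exp_neg_mul_sq (b := (1:ℝ)/2) (by norm_num)
    (s := (n:ℝ)) (lt_of_lt_of_le (by norm_num) (Nat.cast_nonneg n))
  simpa [Real.rpow_natCast] using h

lemma abs_pow_le (x : ℝ) (n : ℕ) : |x| ^ n ≤ 1 + x ^ (2*n) := by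
  have h2 : x ^ (2*n) = |x| ^ (2*n) := by
    rw [pow_mul, pow_mul, sq_abs]
  rw [h2]
  rcases le_total |x| 1 with h | h
  · have : |x| ^ n ≤ 1 := pow_le_one₀ (abs_nonneg x) h
    nlinarith [pow_nonneg (abs_nonneg x) (2*n)]
  · have : |x| ^ n ≤ |x| ^ (2*n) := pow_le_pow_right₀ h (by omega)
    nlinarith

lemma integrable_abs_pow_mul_gauss (n : ℕ) :
    Integrable (fun x : ℝ => |x| ^ n * Real.exp (-(1/2) * x^2)) := by
  apply Integrable.mono' ((integrable_pow_gauss 0).add (integrable_pow_gauss (2*n)))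
  · exact (Continuous.mul (by continuity) (by continuity)).aestronglyMeasurable
  · filter_upwards with x
    have h1 : (0:ℝ) < Real.exp (-(1/2) * x^2) := Real.exp_pos _
    have h2 := abs_pow_le x n
    rw [Real.norm_eq_abs, abs_mul, abs_of_pos h1, abs_of_nonneg (by positivity : (0:ℝ) ≤ |x|^n)]
    simp only [Pi.add_apply, pow_zero, one_mul]
    nlinarith

lemma tendsto_pow_gauss_atTop (n : ℕ) :
    Tendsto (fun x : ℝ => x ^ n * Real.exp (-(1/2) * x^2)) atTop (nhds 0) := by
  refine squeeze_zero_norm' ?_ (tendsto_pow_mul_exp_neg_atTop_nhds_zero n)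
  filter_upwards [eventually_ge_atTop (2:ℝ)] with x hx
  have hx0 : (0:ℝ) ≤ x := by linarith
  rw [Real.norm_eq_abs, abs_mul, abs_of_nonneg (pow_nonneg hx0 n),
    abs_of_pos (Real.exp_pos _)]
  have : -(1/2) * x^2 ≤ -x := by nlinarith
  exact mul_le_mul_of_nonneg_left (Real.exp_le_exp.mpr this) (pow_nonneg hx0 n)

lemma tendsto_pow_gauss_atBot (n : ℕ) :
    Tendsto (fun x : ℝ => x ^ n * Real.exp (-(1/2) * x^2)) atBot (nhds 0) := by
  have h := ((tendsto_pow_gauss_atTop n).comp tendsto_neg_atBot_atTop).const_mul ((-1:ℝ)^n)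
  rw [mul_zero] at h
  refine Filter.Tendsto.congr (fun x => ?_) h
  simp only [Function.comp_apply]
  rw [neg_sq, ← mul_assoc, ← mul_pow]
  norm_num

lemma integral_pow_mul_gauss_succ (n : ℕ) :
    ∫ x : ℝ, x ^ (n+1) * Real.exp (-(1/2) * x^2)
      = n * ∫ x : ℝ, x ^ (n-1) * Real.exp (-(1/2) * x^2) := by
  have hG : ∀ x : ℝ, HasDerivAt (fun y : ℝ => Real.exp (-(1/2) * y^2)) (-x * Real.exp (-(1/2)*x^2)) x := by
    intro x
    have h1 : HasDerivAt (fun y : ℝ => -(1/2) * y^2) (-x) x := by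
      have : HasDerivAt (fun y : ℝ => -(1/2) * y^2) _ x := (hasDerivAt_pow 2 x).const_mul (-(1/2) : ℝ)
      convert this using 1
      push_cast; ring
    have := h1.exp
    convert this using 1
    ring
  have key : ∀ x : ℝ, HasDerivAt (fun y : ℝ => -(y^n * Real.exp (-(1/2) * y^2)))
      (x^(n+1) * Real.exp (-(1/2)*x^2) - (n : ℝ) * (x^(n-1) * Real.exp (-(1/2)*x^2))) x := by
    intro x
    have h1 : HasDerivAt (fun y : ℝ => -(y^n * Real.exp (-(1/2) * y^2))) _ x := ((hasDerivAt_pow n x).mul (hG x)).neg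
    convert h1 using 1
    cases n with
    | zero => simp
    | succ m =>
      rw [Nat.add_sub_cancel]
      push_cast
      ring
  have hint : Integrable (fun x : ℝ => x^(n+1) * Real.exp (-(1/2)*x^2) - (n:ℝ) * (x^(n-1) * Real.exp (-(1/2)*x^2))) := by
    exact (integrable_pow_gauss (n+1)).sub ((integrable_pow_gauss (n-1)).const_mul _)
  have hbot : Tendsto (fun y : ℝ => -(y^n * Real.exp (-(1/2) * y^2))) atBot (nhds 0) := by
    simpa using (tendsto_pow_gauss_atBot n).neg
  have htop : Tendsto (fun y : ℝ => -(y^n * Real.exp (-(1/2) * y^2))) atTop (nhds 0) := by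
    simpa using (tendsto_pow_gauss_atTop n).neg
  have h0 := MeasureTheory.integral_of_hasDerivAt_of_tendsto key hint hbot htop
  rw [sub_zero] at h0  -- h0 : ∫ ... = 0 - 0? check
  have hsplit := MeasureTheory.integral_sub (integrable_pow_gauss (n+1))
    ((integrable_pow_gauss (n-1)).const_mul (n:ℝ))
  rw [hsplit] at h0
  rw [MeasureTheory.integral_const_mul] at h0
  linarith [h0]


lemma gaussianPDFReal_zero_one (x : ℝ) :
    gaussianPDFReal 0 1 x = (Real.sqrt (2 * Real.pi))⁻¹ * Real.exp (-(1/2) * x^2) := by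
  rw [gaussianPDFReal]
  norm_num
  ring_nf
  exact Or.inl trivial

lemma integral_gaussian_eq (g : ℝ → ℝ) :
    ∫ x, g x ∂(gaussianReal 0 1)
      = ∫ x, gaussianPDFReal 0 1 x * g x := by
  rw [gaussianReal_of_var_ne_zero 0 one_ne_zero]
  have hmeas : Measurable fun x => (gaussianPDFReal 0 1 x).toNNReal :=
    (measurable_gaussianPDFReal 0 1).real_toNNReal
  rw [show gaussianPDF 0 1 = fun x => ((gaussianPDFReal 0 1 x).toNNReal : ENNReal) from rfl]
  rw [integral_withDensity_eq_integral_smul hmeas g]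
  congr 1
  ext x
  rw [NNReal.smul_def, Real.coe_toNNReal _ (gaussianPDFReal_nonneg 0 1 x), smul_eq_mul]

lemma integrable_gauss_poly_mul (g : ℝ → ℝ)
    (hg : Integrable (fun x => g x * Real.exp (-(1/2) * x^2))) :
    Integrable (fun x => gaussianPDFReal 0 1 x * g x) := by
  have := (hg.const_mul ((Real.sqrt (2 * Real.pi))⁻¹))
  refine this.congr (Filter.Eventually.of_forall fun x => ?_)
  dsimp only
  rw [gaussianPDFReal_zero_one]
  ring

lemma integrable_in_gaussian (g : ℝ → ℝ)
    (hg : Integrable (fun x => g x * Real.exp (-(1/2) * x^2))) :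
    Integrable g (gaussianReal 0 1) := by
  rw [gaussianReal_of_var_ne_zero 0 one_ne_zero]
  have hmeas : Measurable fun x => (gaussianPDFReal 0 1 x).toNNReal :=
    (measurable_gaussianPDFReal 0 1).real_toNNReal
  rw [show gaussianPDF 0 1 = fun x => ((gaussianPDFReal 0 1 x).toNNReal : ENNReal) from rfl]
  rw [integrable_withDensity_iff_integrable_smul hmeas]
  refine (integrable_gauss_poly_mul g hg).congr (Filter.Eventually.of_forall fun x => ?_)
  dsimp only
  rw [NNReal.smul_def, Real.coe_toNNReal _ (gaussianPDFReal_nonneg 0 1 x), smul_eq_mul]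


lemma integrable_poly_mul_gauss (p : ℝ[X]) :
    Integrable (fun x : ℝ => p.eval x * Real.exp (-(1/2) * x^2)) := by
  induction p using Polynomial.induction_on' with
  | add p q hp hq =>
    refine (hp.add hq).congr (Filter.Eventually.of_forall fun x => ?_)
    simp [eval_add]; ring
  | monomial n a =>
    refine ((integrable_pow_gauss n).const_mul a).congr (Filter.Eventually.of_forall fun x => ?_)
    simp [eval_monomial]; ring

lemma integrable_poly_gaussian (p : ℝ[X]) :
    Integrable (fun x => p.eval x) (gaussianReal 0 1) :=
  integrable_in_gaussian _ (integrable_poly_mul_gauss p)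

lemma stein_volume (p : ℝ[X]) :
    ∫ x : ℝ, (x * p.eval x) * Real.exp (-(1/2) * x^2)
      = ∫ x : ℝ, (derivative p).eval x * Real.exp (-(1/2) * x^2) := by
  induction p using Polynomial.induction_on' with
  | add p q hp hq =>
    have e1 : ∀ x : ℝ, (x * (p+q).eval x) * Real.exp (-(1/2) * x^2)
        = (x * p.eval x) * Real.exp (-(1/2) * x^2) + (x * q.eval x) * Real.exp (-(1/2) * x^2) := by
      intro x; simp [eval_add]; ring
    have hip : Integrable (fun x : ℝ => (x * p.eval x) * Real.exp (-(1/2) * x^2)) := by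
      refine (integrable_poly_mul_gauss (X * p)).congr (Filter.Eventually.of_forall fun x => ?_)
      simp [eval_mul]
    have hiq : Integrable (fun x : ℝ => (x * q.eval x) * Real.exp (-(1/2) * x^2)) := by
      refine (integrable_poly_mul_gauss (X * q)).congr (Filter.Eventually.of_forall fun x => ?_)
      simp [eval_mul]
    calc ∫ x : ℝ, (x * (p+q).eval x) * Real.exp (-(1/2) * x^2)
        = ∫ x : ℝ, ((x * p.eval x) * Real.exp (-(1/2) * x^2) + (x * q.eval x) * Real.exp (-(1/2) * x^2)) := by
          exact integral_congr_ae (Filter.Eventually.of_forall e1)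
      _ = (∫ x : ℝ, (x * p.eval x) * Real.exp (-(1/2) * x^2)) + ∫ x : ℝ, (x * q.eval x) * Real.exp (-(1/2) * x^2) :=
          integral_add hip hiq
      _ = (∫ x : ℝ, (derivative p).eval x * Real.exp (-(1/2) * x^2)) + ∫ x : ℝ, (derivative q).eval x * Real.exp (-(1/2) * x^2) := by rw [hp, hq]
      _ = ∫ x : ℝ, (derivative (p+q)).eval x * Real.exp (-(1/2) * x^2) := by
          rw [← integral_add (integrable_poly_mul_gauss (derivative p)) (integrable_poly_mul_gauss (derivative q))]
          refine integral_congr_ae (Filter.Eventually.of_forall fun x => ?_)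
          simp [eval_add]; ring
  | monomial n a =>
    have e1 : ∀ x : ℝ, (x * (monomial n a).eval x) * Real.exp (-(1/2) * x^2)
        = a * (x^(n+1) * Real.exp (-(1/2) * x^2)) := by
      intro x; simp [eval_monomial]; ring
    have e2 : ∀ x : ℝ, (derivative (monomial n a)).eval x * Real.exp (-(1/2) * x^2)
        = (a * n) * (x^(n-1) * Real.exp (-(1/2) * x^2)) := by
      intro x; rw [derivative_monomial]; simp [eval_monomial]; ring
    rw [integral_congr_ae (Filter.Eventually.of_forall e1),
      integral_congr_ae (Filter.Eventually.of_forall e2),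
      MeasureTheory.integral_const_mul, MeasureTheory.integral_const_mul,
      integral_pow_mul_gauss_succ n]
    ring

lemma stein_gauss (p : ℝ[X]) :
    ∫ x, x * p.eval x ∂(gaussianReal 0 1)
      = ∫ x, (derivative p).eval x ∂(gaussianReal 0 1) := by
  rw [integral_gaussian_eq, integral_gaussian_eq]
  have key : ∀ f : ℝ → ℝ, ∫ x, gaussianPDFReal 0 1 x * f x
      = (Real.sqrt (2 * Real.pi))⁻¹ * ∫ x, f x * Real.exp (-(1/2) * x^2) := by
    intro f
    rw [← MeasureTheory.integral_const_mul]
    refine integral_congr_ae (Filter.Eventually.of_forall fun x => ?_)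
    dsimp only
    rw [gaussianPDFReal_zero_one]; ring
  rw [key, key, stein_volume p]


lemma integrable_abs_pow_gaussian (k : ℕ) :
    Integrable (fun x => |x| ^ k) (gaussianReal 0 1) :=
  integrable_in_gaussian _ (integrable_abs_pow_mul_gauss k)

lemma integrable_one_add_abs_pow (m : ℕ) :
    Integrable (fun x => (1 + |x|) ^ m) (gaussianReal 0 1) := by
  apply Integrable.mono' (((integrable_const (1:ℝ)).add (integrable_abs_pow_gaussian m)).const_mul ((2:ℝ)^m))
  · exact (Continuous.pow (by continuity) m).aestronglyMeasurable
  · filter_upwards with x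
    rw [Real.norm_eq_abs, abs_of_nonneg (by positivity : (0:ℝ) ≤ (1+|x|)^m)]
    rcases le_total |x| 1 with h | h
    · have h1 : (1+|x|)^m ≤ 2^m := pow_le_pow_left₀ (by positivity) (by linarith) m
      have h2 : (0:ℝ) ≤ |x|^m := by positivity
      calc (1+|x|)^m ≤ 2^m := h1
        _ ≤ 2^m * (1 + |x|^m) := by nlinarith [pow_pos (by norm_num : (0:ℝ) < 2) m]
    · have h1 : (1+|x|)^m ≤ (2*|x|)^m := pow_le_pow_left₀ (by positivity) (by linarith) m
      have h2 : (0:ℝ) < 2^m := by positivity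
      calc (1+|x|)^m ≤ (2*|x|)^m := h1
        _ = 2^m * |x|^m := by rw [mul_pow]
        _ ≤ 2^m * (1 + |x|^m) := by nlinarith

lemma integrable_polyGrowth {f : ℝ × ℝ → ℝ} (hf : Continuous f) (C : ℝ) (m : ℕ)
    (hb : ∀ z : ℝ × ℝ, |f z| ≤ C * ((1+|z.1|)^m * (1+|z.2|)^m)) :
    Integrable f ((gaussianReal 0 1).prod (gaussianReal 0 1)) := by
  apply Integrable.mono' (((integrable_one_add_abs_pow m).mul_prod (integrable_one_add_abs_pow m)).const_mul C)
  · exact hf.aestronglyMeasurable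
  · filter_upwards with z
    rw [Real.norm_eq_abs]
    exact hb z

lemma poly_bound (p : ℝ[X]) :
    ∃ C : ℝ, 0 ≤ C ∧ ∀ t : ℝ, |p.eval t| ≤ C * (1 + |t|) ^ p.natDegree := by
  refine ⟨∑ k ∈ Finset.range (p.natDegree + 1), |p.coeff k|,
    Finset.sum_nonneg fun k _ => abs_nonneg _, fun t => ?_⟩
  rw [Polynomial.eval_eq_sum_range]
  calc |∑ k ∈ Finset.range (p.natDegree + 1), p.coeff k * t ^ k|
      ≤ ∑ k ∈ Finset.range (p.natDegree + 1), |p.coeff k * t ^ k| :=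
        Finset.abs_sum_le_sum_abs _ _
    _ ≤ ∑ k ∈ Finset.range (p.natDegree + 1), |p.coeff k| * (1+|t|)^p.natDegree := by
        refine Finset.sum_le_sum fun k hk => ?_
        rw [abs_mul, abs_pow]
        refine mul_le_mul_of_nonneg_left ?_ (abs_nonneg _)
        calc |t|^k ≤ (1+|t|)^k := pow_le_pow_left₀ (abs_nonneg t) (by linarith [abs_nonneg t]) k
          _ ≤ (1+|t|)^p.natDegree :=
            pow_le_pow_right₀ (by linarith [abs_nonneg t]) (by
              simpa [Nat.lt_succ_iff] using Finset.mem_range.mp hk)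
    _ = (∑ k ∈ Finset.range (p.natDegree + 1), |p.coeff k|) * (1+|t|)^p.natDegree := by
        rw [Finset.sum_mul]

lemma evalLin_bound (p : ℝ[X]) (a b : ℝ) :
    ∃ C : ℝ, 0 ≤ C ∧ ∀ z : ℝ × ℝ,
      |p.eval (a*z.1+b*z.2)| ≤ C * ((1+|z.1|)^p.natDegree * (1+|z.2|)^p.natDegree) := by
  obtain ⟨C, hC0, hC⟩ := poly_bound p
  set K : ℝ := 1 + |a| + |b| with hK
  have hK1 : (1:ℝ) ≤ K := by linarith [abs_nonneg a, abs_nonneg b]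
  refine ⟨C * K ^ p.natDegree, by positivity, fun z => ?_⟩
  have hbase : 1 + |a*z.1+b*z.2| ≤ K * ((1+|z.1|)*(1+|z.2|)) := by
    have h1 : |a*z.1+b*z.2| ≤ |a| * |z.1| + |b| * |z.2| := by
      calc |a*z.1+b*z.2| ≤ |a*z.1| + |b*z.2| := abs_add_le _ _
        _ = |a| * |z.1| + |b| * |z.2| := by rw [abs_mul, abs_mul]
    nlinarith [abs_nonneg a, abs_nonneg b, abs_nonneg z.1, abs_nonneg z.2,
      mul_nonneg (abs_nonneg z.1) (abs_nonneg z.2), mul_nonneg (abs_nonneg a) (mul_nonneg (abs_nonneg z.1) (abs_nonneg z.2)), mul_nonneg (abs_nonneg b) (mul_nonneg (abs_nonneg z.1) (abs_nonneg z.2))]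
  calc |p.eval (a*z.1+b*z.2)| ≤ C * (1 + |a*z.1+b*z.2|) ^ p.natDegree := hC _
    _ ≤ C * (K * ((1+|z.1|)*(1+|z.2|))) ^ p.natDegree := by
        refine mul_le_mul_of_nonneg_left (pow_le_pow_left₀ (by positivity) hbase _) hC0
    _ = C * K ^ p.natDegree * ((1+|z.1|)^p.natDegree * (1+|z.2|)^p.natDegree) := by
        rw [mul_pow, mul_pow]; ring

lemma bnd_mul {f g : ℝ × ℝ → ℝ} {C1 C2 : ℝ} {m1 m2 : ℕ} (hC1 : 0 ≤ C1)
    (h1 : ∀ z : ℝ × ℝ, |f z| ≤ C1*((1+|z.1|)^m1*(1+|z.2|)^m1))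
    (h2 : ∀ z : ℝ × ℝ, |g z| ≤ C2*((1+|z.1|)^m2*(1+|z.2|)^m2)) :
    ∀ z : ℝ × ℝ, |f z * g z| ≤ (C1*C2)*((1+|z.1|)^(m1+m2)*(1+|z.2|)^(m1+m2)) := by
  intro z
  rw [abs_mul, pow_add, pow_add]
  calc |f z| * |g z|
      ≤ (C1*((1+|z.1|)^m1*(1+|z.2|)^m1)) * (C2*((1+|z.1|)^m2*(1+|z.2|)^m2)) :=
        mul_le_mul (h1 z) (h2 z) (abs_nonneg _) (by positivity)
    _ = (C1*C2)*((1+|z.1|)^m1*(1+|z.1|)^m2*((1+|z.2|)^m1*(1+|z.2|)^m2)) := by ring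

lemma bnd_fst : ∀ z : ℝ × ℝ, |(fun w : ℝ × ℝ => w.1) z| ≤ 1*((1+|z.1|)^1*(1+|z.2|)^1) := by
  intro z
  simp only [pow_one, one_mul]
  nlinarith [abs_nonneg z.1, abs_nonneg z.2, mul_nonneg (abs_nonneg z.1) (abs_nonneg z.2)]

lemma bnd_snd : ∀ z : ℝ × ℝ, |(fun w : ℝ × ℝ => w.2) z| ≤ 1*((1+|z.1|)^1*(1+|z.2|)^1) := by
  intro z
  simp only [pow_one, one_mul]
  nlinarith [abs_nonneg z.1, abs_nonneg z.2, mul_nonneg (abs_nonneg z.1) (abs_nonneg z.2)]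


lemma cont_evalLin (p : ℝ[X]) (a b : ℝ) :
    Continuous fun z : ℝ × ℝ => p.eval (a*z.1+b*z.2) := by
  exact p.continuous.comp (by continuity)

lemma integrable_F (p q : ℝ[X]) (a b c d : ℝ) :
    Integrable (fun z : ℝ × ℝ => p.eval (a*z.1+b*z.2) * q.eval (c*z.1+d*z.2))
      ((gaussianReal 0 1).prod (gaussianReal 0 1)) := by
  obtain ⟨C1, h10, h1⟩ := evalLin_bound p a b
  obtain ⟨C2, h20, h2⟩ := evalLin_bound q c d
  exact integrable_polyGrowth ((cont_evalLin p a b).mul (cont_evalLin q c d)) _ _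
    (bnd_mul h10 h1 h2)

lemma integrable_zF1 (p q : ℝ[X]) (a b c d : ℝ) :
    Integrable (fun z : ℝ × ℝ => z.1 * (p.eval (a*z.1+b*z.2) * q.eval (c*z.1+d*z.2)))
      ((gaussianReal 0 1).prod (gaussianReal 0 1)) := by
  obtain ⟨C1, h10, h1⟩ := evalLin_bound p a b
  obtain ⟨C2, h20, h2⟩ := evalLin_bound q c d
  exact integrable_polyGrowth (continuous_fst.mul ((cont_evalLin p a b).mul (cont_evalLin q c d))) _ _
    (bnd_mul (by norm_num) bnd_fst (bnd_mul h10 h1 h2))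

lemma integrable_zF2 (p q : ℝ[X]) (a b c d : ℝ) :
    Integrable (fun z : ℝ × ℝ => z.2 * (p.eval (a*z.1+b*z.2) * q.eval (c*z.1+d*z.2)))
      ((gaussianReal 0 1).prod (gaussianReal 0 1)) := by
  obtain ⟨C1, h10, h1⟩ := evalLin_bound p a b
  obtain ⟨C2, h20, h2⟩ := evalLin_bound q c d
  exact integrable_polyGrowth (continuous_snd.mul ((cont_evalLin p a b).mul (cont_evalLin q c d))) _ _
    (bnd_mul (by norm_num) bnd_snd (bnd_mul h10 h1 h2))

/-- the bilinear hermite-type integral -/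
def EE (u1 u2 v1 v2 : ℝ) (p q : ℝ[X]) : ℝ :=
  ∫ z : ℝ × ℝ, p.eval (u1*z.1+u2*z.2) * q.eval (v1*z.1+v2*z.2)
    ∂((gaussianReal 0 1).prod (gaussianReal 0 1))

lemma comp_eval (p : ℝ[X]) (a c x : ℝ) : (p.comp (C a * X + C c)).eval x = p.eval (a*x+c) := by
  simp [eval_comp]

lemma deriv_comp_lin (p : ℝ[X]) (a c : ℝ) :
    derivative (p.comp (C a * X + C c)) = C a * (derivative p).comp (C a * X + C c) := by
  rw [derivative_comp]
  simp only [derivative_add, derivative_mul, derivative_C, derivative_X]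
  ring

lemma claim1 (u1 u2 v1 v2 : ℝ) (p q : ℝ[X]) :
    ∫ z : ℝ × ℝ, z.1 * (p.eval (u1*z.1+u2*z.2) * q.eval (v1*z.1+v2*z.2))
      ∂((gaussianReal 0 1).prod (gaussianReal 0 1))
    = u1 * EE u1 u2 v1 v2 (derivative p) q + v1 * EE u1 u2 v1 v2 p (derivative q) := by
  have hA := integrable_F (derivative p) q u1 u2 v1 v2
  have hB := integrable_F p (derivative q) u1 u2 v1 v2
  have hG : Integrable (fun z : ℝ × ℝ =>
      u1 * ((derivative p).eval (u1*z.1+u2*z.2) * q.eval (v1*z.1+v2*z.2))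
      + v1 * (p.eval (u1*z.1+u2*z.2) * (derivative q).eval (v1*z.1+v2*z.2)))
      ((gaussianReal 0 1).prod (gaussianReal 0 1)) := (hA.const_mul u1).add (hB.const_mul v1)
  have inner : ∀ y : ℝ,
      (∫ x, x * (p.eval (u1*x+u2*y) * q.eval (v1*x+v2*y)) ∂(gaussianReal 0 1))
      = ∫ x, (u1 * ((derivative p).eval (u1*x+u2*y) * q.eval (v1*x+v2*y))
          + v1 * (p.eval (u1*x+u2*y) * (derivative q).eval (v1*x+v2*y))) ∂(gaussianReal 0 1) := by
    intro y
    set R : ℝ[X] := p.comp (C u1 * X + C (u2*y)) * q.comp (C v1 * X + C (v2*y)) with hRdef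
    have hR : ∀ x : ℝ, x * (p.eval (u1*x+u2*y) * q.eval (v1*x+v2*y)) = x * R.eval x := by
      intro x
      rw [hRdef, eval_mul, comp_eval, comp_eval]
    rw [integral_congr_ae (Filter.Eventually.of_forall hR), stein_gauss R]
    refine integral_congr_ae (Filter.Eventually.of_forall fun x => ?_)
    dsimp only
    rw [hRdef, derivative_mul, eval_add, eval_mul, eval_mul,
      deriv_comp_lin, deriv_comp_lin, eval_mul, eval_mul, eval_C, eval_C,
      comp_eval, comp_eval, comp_eval, comp_eval]
    ring
  calc ∫ z : ℝ × ℝ, z.1 * (p.eval (u1*z.1+u2*z.2) * q.eval (v1*z.1+v2*z.2))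
        ∂((gaussianReal 0 1).prod (gaussianReal 0 1))
      = ∫ y, ∫ x, x * (p.eval (u1*x+u2*y) * q.eval (v1*x+v2*y)) ∂(gaussianReal 0 1)
          ∂(gaussianReal 0 1) := integral_prod_symm _ (integrable_zF1 p q u1 u2 v1 v2)
    _ = ∫ y, ∫ x, (u1 * ((derivative p).eval (u1*x+u2*y) * q.eval (v1*x+v2*y))
          + v1 * (p.eval (u1*x+u2*y) * (derivative q).eval (v1*x+v2*y))) ∂(gaussianReal 0 1)
          ∂(gaussianReal 0 1) :=
        integral_congr_ae (Filter.Eventually.of_forall fun y => inner y)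
    _ = ∫ z : ℝ × ℝ, (u1 * ((derivative p).eval (u1*z.1+u2*z.2) * q.eval (v1*z.1+v2*z.2))
          + v1 * (p.eval (u1*z.1+u2*z.2) * (derivative q).eval (v1*z.1+v2*z.2)))
          ∂((gaussianReal 0 1).prod (gaussianReal 0 1)) := (integral_prod_symm _ hG).symm
    _ = u1 * EE u1 u2 v1 v2 (derivative p) q + v1 * EE u1 u2 v1 v2 p (derivative q) := by
        rw [integral_add (hA.const_mul u1) (hB.const_mul v1),
          MeasureTheory.integral_const_mul, MeasureTheory.integral_const_mul]
        rfl

lemma claim2 (u1 u2 v1 v2 : ℝ) (p q : ℝ[X]) :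
    ∫ z : ℝ × ℝ, z.2 * (p.eval (u1*z.1+u2*z.2) * q.eval (v1*z.1+v2*z.2))
      ∂((gaussianReal 0 1).prod (gaussianReal 0 1))
    = u2 * EE u1 u2 v1 v2 (derivative p) q + v2 * EE u1 u2 v1 v2 p (derivative q) := by
  have hA := integrable_F (derivative p) q u1 u2 v1 v2
  have hB := integrable_F p (derivative q) u1 u2 v1 v2
  have hG : Integrable (fun z : ℝ × ℝ =>
      u2 * ((derivative p).eval (u1*z.1+u2*z.2) * q.eval (v1*z.1+v2*z.2))
      + v2 * (p.eval (u1*z.1+u2*z.2) * (derivative q).eval (v1*z.1+v2*z.2)))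
      ((gaussianReal 0 1).prod (gaussianReal 0 1)) := (hA.const_mul u2).add (hB.const_mul v2)
  have inner : ∀ x : ℝ,
      (∫ y, y * (p.eval (u1*x+u2*y) * q.eval (v1*x+v2*y)) ∂(gaussianReal 0 1))
      = ∫ y, (u2 * ((derivative p).eval (u1*x+u2*y) * q.eval (v1*x+v2*y))
          + v2 * (p.eval (u1*x+u2*y) * (derivative q).eval (v1*x+v2*y))) ∂(gaussianReal 0 1) := by
    intro x
    set R : ℝ[X] := p.comp (C u2 * X + C (u1*x)) * q.comp (C v2 * X + C (v1*x)) with hRdef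
    have hR : ∀ y : ℝ, y * (p.eval (u1*x+u2*y) * q.eval (v1*x+v2*y)) = y * R.eval y := by
      intro y
      rw [hRdef, eval_mul, comp_eval, comp_eval, add_comm (u1*x), add_comm (v1*x)]
    rw [integral_congr_ae (Filter.Eventually.of_forall hR), stein_gauss R]
    refine integral_congr_ae (Filter.Eventually.of_forall fun y => ?_)
    dsimp only
    rw [hRdef, derivative_mul, eval_add, eval_mul, eval_mul,
      deriv_comp_lin, deriv_comp_lin, eval_mul, eval_mul, eval_C, eval_C,
      comp_eval, comp_eval, comp_eval, comp_eval, add_comm (u2*y), add_comm (v2*y)]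
    ring
  calc ∫ z : ℝ × ℝ, z.2 * (p.eval (u1*z.1+u2*z.2) * q.eval (v1*z.1+v2*z.2))
        ∂((gaussianReal 0 1).prod (gaussianReal 0 1))
      = ∫ x, ∫ y, y * (p.eval (u1*x+u2*y) * q.eval (v1*x+v2*y)) ∂(gaussianReal 0 1)
          ∂(gaussianReal 0 1) := integral_prod _ (integrable_zF2 p q u1 u2 v1 v2)
    _ = ∫ x, ∫ y, (u2 * ((derivative p).eval (u1*x+u2*y) * q.eval (v1*x+v2*y))
          + v2 * (p.eval (u1*x+u2*y) * (derivative q).eval (v1*x+v2*y))) ∂(gaussianReal 0 1)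
          ∂(gaussianReal 0 1) :=
        integral_congr_ae (Filter.Eventually.of_forall fun x => inner x)
    _ = ∫ z : ℝ × ℝ, (u2 * ((derivative p).eval (u1*z.1+u2*z.2) * q.eval (v1*z.1+v2*z.2))
          + v2 * (p.eval (u1*z.1+u2*z.2) * (derivative q).eval (v1*z.1+v2*z.2)))
          ∂((gaussianReal 0 1).prod (gaussianReal 0 1)) := (integral_prod _ hG).symm
    _ = u2 * EE u1 u2 v1 v2 (derivative p) q + v2 * EE u1 u2 v1 v2 p (derivative q) := by
        rw [integral_add (hA.const_mul u2) (hB.const_mul v2),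
          MeasureTheory.integral_const_mul, MeasureTheory.integral_const_mul]
        rfl

lemma stein2 (u1 u2 v1 v2 : ℝ) (p q : ℝ[X]) :
    ∫ z : ℝ × ℝ, (u1*z.1+u2*z.2) * (p.eval (u1*z.1+u2*z.2) * q.eval (v1*z.1+v2*z.2))
      ∂((gaussianReal 0 1).prod (gaussianReal 0 1))
    = (u1^2+u2^2) * EE u1 u2 v1 v2 (derivative p) q
      + (u1*v1+u2*v2) * EE u1 u2 v1 v2 p (derivative q) := by
  have h1 := integrable_zF1 p q u1 u2 v1 v2
  have h2 := integrable_zF2 p q u1 u2 v1 v2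
  have e1 : ∀ z : ℝ × ℝ, (u1*z.1+u2*z.2) * (p.eval (u1*z.1+u2*z.2) * q.eval (v1*z.1+v2*z.2))
      = u1 * (z.1 * (p.eval (u1*z.1+u2*z.2) * q.eval (v1*z.1+v2*z.2)))
        + u2 * (z.2 * (p.eval (u1*z.1+u2*z.2) * q.eval (v1*z.1+v2*z.2))) := by
    intro z; ring
  rw [integral_congr_ae (Filter.Eventually.of_forall e1),
    integral_add (h1.const_mul u1) (h2.const_mul u2),
    MeasureTheory.integral_const_mul, MeasureTheory.integral_const_mul,
    claim1, claim2]
  ring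


lemma EE_natCast_left (u1 u2 v1 v2 : ℝ) (n : ℕ) (p q : ℝ[X]) :
    EE u1 u2 v1 v2 ((n : ℝ[X]) * p) q = (n : ℝ) * EE u1 u2 v1 v2 p q := by
  rw [EE, EE, ← MeasureTheory.integral_const_mul]
  refine integral_congr_ae (Filter.Eventually.of_forall fun z => ?_)
  dsimp only
  rw [eval_mul, eval_natCast]
  ring

lemma EE_natCast_right (u1 u2 v1 v2 : ℝ) (n : ℕ) (p q : ℝ[X]) :
    EE u1 u2 v1 v2 p ((n : ℝ[X]) * q) = (n : ℝ) * EE u1 u2 v1 v2 p q := by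
  rw [EE, EE, ← MeasureTheory.integral_const_mul]
  refine integral_congr_ae (Filter.Eventually.of_forall fun z => ?_)
  dsimp only
  rw [eval_mul, eval_natCast]
  ring

lemma EE_succ (u1 u2 v1 v2 : ℝ) (hu : u1^2+u2^2 = 1) (s : ℕ) :
    EE u1 u2 v1 v2 (Hr (s+1)) (Hr (s+1))
      = ((s:ℝ)+1) * (u1*v1+u2*v2) * EE u1 u2 v1 v2 (Hr s) (Hr s) := by
  have heval : ∀ t : ℝ, (Hr (s+1)).eval t = t * (Hr s).eval t - (s:ℝ) * (Hr (s-1)).eval t := by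
    intro t
    rw [Hr_succ, derivative_Hr, eval_sub, eval_mul, eval_mul, eval_X, eval_natCast]
  have hI1 : Integrable (fun z : ℝ × ℝ => (u1*z.1+u2*z.2) *
      ((Hr s).eval (u1*z.1+u2*z.2) * (Hr (s+1)).eval (v1*z.1+v2*z.2)))
      ((gaussianReal 0 1).prod (gaussianReal 0 1)) := by
    refine (((integrable_zF1 (Hr s) (Hr (s+1)) u1 u2 v1 v2).const_mul u1).add
      ((integrable_zF2 (Hr s) (Hr (s+1)) u1 u2 v1 v2).const_mul u2)).congr
      (Filter.Eventually.of_forall fun z => ?_)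
    simp only [Pi.add_apply]
    ring
  have hI2 : Integrable (fun z : ℝ × ℝ => (s:ℝ) *
      ((Hr (s-1)).eval (u1*z.1+u2*z.2) * (Hr (s+1)).eval (v1*z.1+v2*z.2)))
      ((gaussianReal 0 1).prod (gaussianReal 0 1)) :=
    (integrable_F (Hr (s-1)) (Hr (s+1)) u1 u2 v1 v2).const_mul _
  have hsplit : ∀ z : ℝ × ℝ,
      (Hr (s+1)).eval (u1*z.1+u2*z.2) * (Hr (s+1)).eval (v1*z.1+v2*z.2)
      = (u1*z.1+u2*z.2) * ((Hr s).eval (u1*z.1+u2*z.2) * (Hr (s+1)).eval (v1*z.1+v2*z.2))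
        - (s:ℝ) * ((Hr (s-1)).eval (u1*z.1+u2*z.2) * (Hr (s+1)).eval (v1*z.1+v2*z.2)) := by
    intro z
    rw [show (Hr (s+1)).eval (u1*z.1+u2*z.2)
      = (u1*z.1+u2*z.2) * (Hr s).eval (u1*z.1+u2*z.2)
        - (s:ℝ) * (Hr (s-1)).eval (u1*z.1+u2*z.2) from heval _]
    ring
  rw [show EE u1 u2 v1 v2 (Hr (s+1)) (Hr (s+1))
      = ∫ z : ℝ × ℝ, ((u1*z.1+u2*z.2) * ((Hr s).eval (u1*z.1+u2*z.2) * (Hr (s+1)).eval (v1*z.1+v2*z.2))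
        - (s:ℝ) * ((Hr (s-1)).eval (u1*z.1+u2*z.2) * (Hr (s+1)).eval (v1*z.1+v2*z.2)))
        ∂((gaussianReal 0 1).prod (gaussianReal 0 1)) from
    integral_congr_ae (Filter.Eventually.of_forall hsplit)]
  rw [integral_sub hI1 hI2, stein2 u1 u2 v1 v2 (Hr s) (Hr (s+1)),
    MeasureTheory.integral_const_mul, derivative_Hr s, derivative_Hr (s+1),
    Nat.add_sub_cancel, EE_natCast_left, EE_natCast_right, hu]
  show (1 : ℝ) * ((s:ℝ) * EE u1 u2 v1 v2 (Hr (s-1)) (Hr (s+1)))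
      + (u1*v1+u2*v2) * (((s:ℕ)+1 : ℕ) * EE u1 u2 v1 v2 (Hr s) (Hr s))
      - (s:ℝ) * EE u1 u2 v1 v2 (Hr (s-1)) (Hr (s+1))
      = ((s:ℝ)+1) * (u1*v1+u2*v2) * EE u1 u2 v1 v2 (Hr s) (Hr s)
  push_cast
  ring

lemma EE_diag (u1 u2 v1 v2 : ℝ) (hu : u1^2+u2^2 = 1) (s : ℕ) :
    EE u1 u2 v1 v2 (Hr s) (Hr s) = (s.factorial : ℝ) * (u1*v1+u2*v2)^s := by
  induction s with
  | zero => simp [EE, Hr_zero]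
  | succ s ih =>
    rw [EE_succ u1 u2 v1 v2 hu s, ih, Nat.factorial_succ]
    push_cast
    ring


lemma hermiteFn_eq (s : ℕ) (t : ℝ) :
    hermiteFn s t = (Hr s).eval t / Real.sqrt (s.factorial) := by
  rw [hermiteFn, aeval_hermite_eq]

lemma hermiteFn_mul (s : ℕ) (t t' : ℝ) :
    hermiteFn s t * hermiteFn s t'
      = ((Hr s).eval t * (Hr s).eval t') / ((s.factorial : ℝ)) := by
  rw [hermiteFn_eq, hermiteFn_eq, div_mul_div_comm,
    Real.mul_self_sqrt (by positivity)]

lemma integrable_hermiteFn2 (s : ℕ) (a b c d : ℝ) :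
    Integrable (fun z : ℝ × ℝ => hermiteFn s (a*z.1+b*z.2) * hermiteFn s (c*z.1+d*z.2))
      ((gaussianReal 0 1).prod (gaussianReal 0 1)) := by
  refine ((integrable_F (Hr s) (Hr s) a b c d).div_const ((s.factorial : ℝ))).congr
    (Filter.Eventually.of_forall fun z => ?_)
  dsimp only
  rw [hermiteFn_mul]

lemma key_integral (u1 u2 v1 v2 : ℝ) (hu : u1^2+u2^2 = 1) (s : ℕ) :
    ∫ z : ℝ × ℝ, hermiteFn s (u1*z.1+u2*z.2) * hermiteFn s (v1*z.1+v2*z.2)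
      ∂((gaussianReal 0 1).prod (gaussianReal 0 1)) = (u1*v1+u2*v2)^s := by
  have h1 : ∀ z : ℝ × ℝ, hermiteFn s (u1*z.1+u2*z.2) * hermiteFn s (v1*z.1+v2*z.2)
      = ((Hr s).eval (u1*z.1+u2*z.2) * (Hr s).eval (v1*z.1+v2*z.2)) / (s.factorial : ℝ) :=
    fun z => hermiteFn_mul s _ _
  rw [integral_congr_ae (Filter.Eventually.of_forall h1), integral_div]
  rw [show (∫ z : ℝ × ℝ, (Hr s).eval (u1*z.1+u2*z.2) * (Hr s).eval (v1*z.1+v2*z.2)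
      ∂((gaussianReal 0 1).prod (gaussianReal 0 1))) = EE u1 u2 v1 v2 (Hr s) (Hr s) from rfl]
  rw [EE_diag u1 u2 v1 v2 hu s]
  have : (s.factorial : ℝ) ≠ 0 := by positivity
  field_simp

lemma double_sum_integral {ι : Type*} [Fintype ι] (Z : ι → ℝ) (s : ℕ) (a b c d : ι → ℝ)
    (hunit : ∀ j, (a j)^2 + (b j)^2 = 1) :
    ∫ z : ℝ × ℝ, (∑ j, Z j * hermiteFn s (a j * z.1 + b j * z.2))
        * (∑ k, Z k * hermiteFn s (c k * z.1 + d k * z.2))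
      ∂((gaussianReal 0 1).prod (gaussianReal 0 1))
    = ∑ j, ∑ k, Z j * Z k * (a j * c k + b j * d k)^s := by
  have expand : ∀ z : ℝ × ℝ,
      (∑ j, Z j * hermiteFn s (a j * z.1 + b j * z.2))
        * (∑ k, Z k * hermiteFn s (c k * z.1 + d k * z.2))
      = ∑ j, ∑ k, (Z j * Z k)
          * (hermiteFn s (a j * z.1 + b j * z.2) * hermiteFn s (c k * z.1 + d k * z.2)) := by
    intro z
    rw [Finset.sum_mul_sum]
    refine Finset.sum_congr rfl fun j _ => Finset.sum_congr rfl fun k _ => by ring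
  rw [integral_congr_ae (Filter.Eventually.of_forall expand)]
  rw [integral_finset_sum _ (fun j _ => integrable_finset_sum _
    (fun k _ => (integrable_hermiteFn2 s (a j) (b j) (c k) (d k)).const_mul (Z j * Z k)))]
  refine Finset.sum_congr rfl fun j _ => ?_
  rw [integral_finset_sum _ (fun k _ =>
    (integrable_hermiteFn2 s (a j) (b j) (c k) (d k)).const_mul (Z j * Z k))]
  refine Finset.sum_congr rfl fun k _ => ?_
  rw [MeasureTheory.integral_const_mul, key_integral (a j) (b j) (c k) (d k) (hunit j) s]

lemma integral_stdGaussian_eq (H : (Fin 2 → ℝ) → ℝ) :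
    ∫ x, H x ∂(stdGaussian 2)
      = ∫ z : ℝ × ℝ, H ![z.1, z.2] ∂((gaussianReal 0 1).prod (gaussianReal 0 1)) := by
  have hmp : MeasurePreserving (MeasurableEquiv.finTwoArrow (α := ℝ))
      (Measure.pi fun _ : Fin 2 => gaussianReal 0 1)
      ((gaussianReal 0 1).prod (gaussianReal 0 1)) :=
    measurePreserving_finTwoArrow _
  have h := hmp.integral_comp (MeasurableEquiv.finTwoArrow (α := ℝ)).measurableEmbedding
      (fun z : ℝ × ℝ => H ![z.1, z.2])
  rw [show stdGaussian 2 = Measure.pi fun _ : Fin 2 => gaussianReal 0 1 from rfl, ← h]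
  refine integral_congr_ae (Filter.Eventually.of_forall fun x => ?_)
  have : ![x 0, x 1] = x := by funext i; fin_cases i <;> rfl
  show H x = H ![x 0, x 1]
  rw [this]

lemma cos_arg1 (N : ℕ) [NeZero N] (θ : ℝ) (j l : ZMod N) :
    Real.cos ((2*π*(j.val:ℝ)/N + θ) - 2*π*(((j+l).val:ℝ))/N)
      = Real.cos (2*π*((l.val:ℝ))/N - θ) := by
  have hN : (N:ℝ) ≠ 0 := Nat.cast_ne_zero.mpr (NeZero.ne N)
  set m : ℕ := (j.val + l.val) / N with hmdef
  have hm : j.val + l.val = (j + l).val + N * m := by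
    rw [ZMod.val_add, hmdef]
    exact (Nat.mod_add_div _ _).symm
  have hr : ((j+l).val : ℝ) = (j.val:ℝ) + l.val - N*m := by
    have := congrArg (Nat.cast : ℕ → ℝ) hm
    push_cast at this
    linarith
  have harg : (2*π*(j.val:ℝ)/N + θ) - 2*π*(((j+l).val:ℝ))/N
      = -(2*π*((l.val:ℝ))/N - θ) + m*(2*π) := by
    rw [hr]
    field_simp
    ring
  rw [harg, Real.cos_add_nat_mul_two_pi, Real.cos_neg]

lemma cos_arg2 (N : ℕ) [NeZero N] (θ : ℝ) (j k : ZMod N) :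
    Real.cos ((2*π*(j.val:ℝ)/N + θ) + 2*π*(((k-j).val:ℝ))/N)
      = Real.cos (2*π*((k.val:ℝ))/N + θ) := by
  have hN : (N:ℝ) ≠ 0 := Nat.cast_ne_zero.mpr (NeZero.ne N)
  set m : ℕ := (j.val + (k-j).val) / N with hmdef
  have hm : j.val + (k-j).val = k.val + N * m := by
    have h1 : (j + (k - j)).val = (j.val + (k-j).val) % N := ZMod.val_add j (k-j)
    have h2 : j + (k - j) = k := by ring
    rw [h2] at h1
    rw [h1, hmdef]
    exact (Nat.mod_add_div _ _).symm
  have hr : ((k-j).val : ℝ) = (k.val:ℝ) + N*m - j.val := by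
    have := congrArg (Nat.cast : ℕ → ℝ) hm
    push_cast at this
    linarith
  have harg : (2*π*(j.val:ℝ)/N + θ) + 2*π*(((k-j).val:ℝ))/N
      = (2*π*((k.val:ℝ))/N + θ) + m*(2*π) := by
    rw [hr]
    field_simp
    ring
  rw [harg, Real.cos_add_nat_mul_two_pi]


end Fact44

open Fact44 in
/-- Fact 4.4 (discrete-to-unitary autocorrelation): the Gaussian correlation of
`g_Z = Σ_j Z_j h_s(w_j ⬝ ·)` with its rotation (resp. reflected rotation) is the
convolution of the cyclic autocorrelation (resp. self-convolution) of `Z` with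
`cos^s`. -/
theorem discrete_to_unitary_autocorrelation (N : ℕ) [NeZero N] (hN : 0 < N)
    (s : ℕ) (hs : 0 < s) (hse : Even s) (Z : ZMod N → ℝ) (θ : ℝ) :
    let w : ZMod N → Fin 2 → ℝ := fun j =>
      ![Real.cos (2 * Real.pi * (j.val : ℝ) / N), Real.sin (2 * Real.pi * (j.val : ℝ) / N)]
    let gZ : (Fin 2 → ℝ) → ℝ := fun x => ∑ j : ZMod N, Z j * hermiteFn s (w j ⬝ᵥ x)
    let Rθ : Matrix (Fin 2) (Fin 2) ℝ :=
      !![Real.cos θ, -Real.sin θ; Real.sin θ, Real.cos θ]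
    let A : Matrix (Fin 2) (Fin 2) ℝ := !![1, 0; 0, -1]
    (∫ x, gZ (Rθᵀ *ᵥ x) * gZ x ∂(stdGaussian 2)
        = ∑ l : ZMod N, (∑ j : ZMod N, Z j * Z (j + l)) *
            Real.cos (2 * Real.pi * (l.val : ℝ) / N - θ) ^ s) ∧
    (∫ x, gZ ((A * Rθ)ᵀ *ᵥ x) * gZ x ∂(stdGaussian 2)
        = ∑ k : ZMod N, (∑ l : ZMod N, Z l * Z (k - l)) *
            Real.cos (2 * Real.pi * (k.val : ℝ) / N + θ) ^ s) := by
  intro w gZ Rθ A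
  constructor
  · -- part 1
    rw [integral_stdGaussian_eq (fun x => gZ (Rθᵀ *ᵥ x) * gZ x)]
    have hcongr : ∀ z : ℝ × ℝ, gZ (Rθᵀ *ᵥ ![z.1, z.2]) * gZ ![z.1, z.2]
        = (∑ j : ZMod N, Z j * hermiteFn s
            (Real.cos (2 * Real.pi * (j.val : ℝ) / N + θ) * z.1
              + Real.sin (2 * Real.pi * (j.val : ℝ) / N + θ) * z.2))
          * (∑ k : ZMod N, Z k * hermiteFn s
            (Real.cos (2 * Real.pi * (k.val : ℝ) / N) * z.1
              + Real.sin (2 * Real.pi * (k.val : ℝ) / N) * z.2)) := by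
      intro z
      simp only [gZ, w, Rθ]
      congr 1
      · refine Finset.sum_congr rfl fun j _ => ?_
        congr 2
        simp [Matrix.mulVec, dotProduct, Fin.sum_univ_two, Real.cos_add, Real.sin_add]
        ring
      · refine Finset.sum_congr rfl fun k _ => ?_
        congr 2
        simp [dotProduct, Fin.sum_univ_two]
    rw [integral_congr_ae (Filter.Eventually.of_forall hcongr)]
    rw [double_sum_integral Z s _ _ _ _
      (fun j => Real.cos_sq_add_sin_sq _)]
    calc ∑ j : ZMod N, ∑ k : ZMod N, Z j * Z k *
          (Real.cos (2 * Real.pi * (j.val : ℝ) / N + θ) * Real.cos (2 * Real.pi * (k.val : ℝ) / N)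
            + Real.sin (2 * Real.pi * (j.val : ℝ) / N + θ) * Real.sin (2 * Real.pi * (k.val : ℝ) / N)) ^ s
        = ∑ j : ZMod N, ∑ l : ZMod N, Z j * Z (j + l) *
            (Real.cos (2 * Real.pi * (j.val : ℝ) / N + θ) * Real.cos (2 * Real.pi * (((j+l).val : ℕ) : ℝ) / N)
              + Real.sin (2 * Real.pi * (j.val : ℝ) / N + θ) * Real.sin (2 * Real.pi * (((j+l).val : ℕ) : ℝ) / N)) ^ s := by
          refine Finset.sum_congr rfl fun j _ => ?_
          exact (Equiv.sum_comp (Equiv.addLeft j) (fun k : ZMod N => Z j * Z k *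
            (Real.cos (2 * Real.pi * (j.val : ℝ) / N + θ) * Real.cos (2 * Real.pi * ((k.val : ℕ) : ℝ) / N)
              + Real.sin (2 * Real.pi * (j.val : ℝ) / N + θ) * Real.sin (2 * Real.pi * ((k.val : ℕ) : ℝ) / N)) ^ s)).symm
      _ = ∑ j : ZMod N, ∑ l : ZMod N, Z j * Z (j + l) *
            Real.cos (2 * Real.pi * (l.val : ℝ) / N - θ) ^ s := by
          refine Finset.sum_congr rfl fun j _ => Finset.sum_congr rfl fun l _ => ?_
          rw [← Real.cos_sub, cos_arg1 N θ j l]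
      _ = ∑ l : ZMod N, ∑ j : ZMod N, Z j * Z (j + l) *
            Real.cos (2 * Real.pi * (l.val : ℝ) / N - θ) ^ s := Finset.sum_comm
      _ = ∑ l : ZMod N, (∑ j : ZMod N, Z j * Z (j + l)) *
            Real.cos (2 * Real.pi * (l.val : ℝ) / N - θ) ^ s := by
          refine Finset.sum_congr rfl fun l _ => ?_
          rw [Finset.sum_mul]
  · -- part 2
    rw [integral_stdGaussian_eq (fun x => gZ ((A * Rθ)ᵀ *ᵥ x) * gZ x)]
    have hcongr : ∀ z : ℝ × ℝ, gZ ((A * Rθ)ᵀ *ᵥ ![z.1, z.2]) * gZ ![z.1, z.2]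
        = (∑ j : ZMod N, Z j * hermiteFn s
            (Real.cos (2 * Real.pi * (j.val : ℝ) / N + θ) * z.1
              + (-Real.sin (2 * Real.pi * (j.val : ℝ) / N + θ)) * z.2))
          * (∑ k : ZMod N, Z k * hermiteFn s
            (Real.cos (2 * Real.pi * (k.val : ℝ) / N) * z.1
              + Real.sin (2 * Real.pi * (k.val : ℝ) / N) * z.2)) := by
      intro z
      simp only [gZ, w, Rθ, A]
      congr 1
      · refine Finset.sum_congr rfl fun j _ => ?_
        congr 2
        simp [Matrix.mul_apply, Matrix.mulVec, dotProduct, Fin.sum_univ_two,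
          Real.cos_add, Real.sin_add]
        ring
      · refine Finset.sum_congr rfl fun k _ => ?_
        congr 2
        simp [dotProduct, Fin.sum_univ_two]
    rw [integral_congr_ae (Filter.Eventually.of_forall hcongr)]
    rw [double_sum_integral Z s _ _ _ _
      (fun j => by rw [neg_sq]; exact Real.cos_sq_add_sin_sq _)]
    calc ∑ j : ZMod N, ∑ k : ZMod N, Z j * Z k *
          (Real.cos (2 * Real.pi * (j.val : ℝ) / N + θ) * Real.cos (2 * Real.pi * (k.val : ℝ) / N)
            + (-Real.sin (2 * Real.pi * (j.val : ℝ) / N + θ)) * Real.sin (2 * Real.pi * (k.val : ℝ) / N)) ^ s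
        = ∑ j : ZMod N, ∑ k : ZMod N, Z j * Z k *
            Real.cos ((2 * Real.pi * (j.val : ℝ) / N + θ) + 2 * Real.pi * (k.val : ℝ) / N) ^ s := by
          refine Finset.sum_congr rfl fun j _ => Finset.sum_congr rfl fun k _ => ?_
          rw [Real.cos_add (2 * Real.pi * (j.val : ℝ) / N + θ) (2 * Real.pi * (k.val : ℝ) / N)]
          ring
      _ = ∑ j : ZMod N, ∑ k : ZMod N, Z j * Z (k - j) *
            Real.cos ((2 * Real.pi * (j.val : ℝ) / N + θ) + 2 * Real.pi * (((k-j).val : ℕ) : ℝ) / N) ^ s := by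
          refine Finset.sum_congr rfl fun j _ => ?_
          exact (Equiv.sum_comp (Equiv.subRight j) (fun k : ZMod N => Z j * Z k *
            Real.cos ((2 * Real.pi * (j.val : ℝ) / N + θ) + 2 * Real.pi * ((k.val : ℕ) : ℝ) / N) ^ s)).symm
      _ = ∑ j : ZMod N, ∑ k : ZMod N, Z j * Z (k - j) *
            Real.cos (2 * Real.pi * (k.val : ℝ) / N + θ) ^ s := by
          refine Finset.sum_congr rfl fun j _ => Finset.sum_congr rfl fun k _ => ?_
          rw [cos_arg2 N θ j k]
      _ = ∑ k : ZMod N, ∑ j : ZMod N, Z j * Z (k - j) *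
            Real.cos (2 * Real.pi * (k.val : ℝ) / N + θ) ^ s := Finset.sum_comm
      _ = ∑ k : ZMod N, (∑ l : ZMod N, Z l * Z (k - l)) *
            Real.cos (2 * Real.pi * (k.val : ℝ) / N + θ) ^ s := by
          refine Finset.sum_congr rfl fun k _ => ?_
          rw [Finset.sum_mul]


end
end

section
/- Let T > 0, C > 0, τ > 0 and a ≥ 1. Let u : [0,T] → ℝ be differentiable, positive and non-decreasing, and let v : [0,T] → ℝ be nonnegative and measurable, such that u′(t) ≥ u(t)^a · v(t) for all t ∈ [0,T], and the Lebesgue measure of { t ∈ [0,T] : v(t) ≥ C } is at least τ. Then: (i) if a > 1, one has (a−1)·C·τ < u(0)^{1−a} and u(T) ≥ ( u(0)^{1−a} − (a−1)·C·τ )^{−1/(a−1)}; (ii) if a = 1, one has u(T) ≥ u(0) · e^{C·τ}. -/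
open MeasureTheory

/-- Lemma F.1 (Gronwall-type lemma for non-decreasing functions): if
`u' ≥ uᵃ v` on `[0,T]` and `v ≥ C` on a set of measure at least `τ`, then
`u(T) ≥ (u(0)^{1-a} - (a-1)Cτ)^{-1/(a-1)}` when `a > 1` (and the quantity inside is
positive), and `u(T) ≥ u(0) e^{Cτ}` when `a = 1`. -/
theorem gronwall_nondecreasing (T C τ a : ℝ) (hT : 0 < T) (hC : 0 < C) (hτ : 0 < τ)
    (ha : 1 ≤ a) (u u' v : ℝ → ℝ)
    (hu : ∀ t ∈ Set.Icc (0 : ℝ) T, HasDerivAt u (u' t) t)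
    (hupos : ∀ t ∈ Set.Icc (0 : ℝ) T, 0 < u t)
    (humono : MonotoneOn u (Set.Icc (0 : ℝ) T))
    (hv : Measurable v) (hv0 : ∀ t ∈ Set.Icc (0 : ℝ) T, 0 ≤ v t)
    (hineq : ∀ t ∈ Set.Icc (0 : ℝ) T, u t ^ a * v t ≤ u' t)
    (hmeas : ENNReal.ofReal τ ≤ volume {t ∈ Set.Icc (0 : ℝ) T | C ≤ v t}) :
    (1 < a →
      (a - 1) * C * τ < u 0 ^ (1 - a) ∧
      (u 0 ^ (1 - a) - (a - 1) * C * τ) ^ (-(1 / (a - 1))) ≤ u T) ∧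
    (a = 1 → u 0 * Real.exp (C * τ) ≤ u T) := by
  have h0mem : (0:ℝ) ∈ Set.Icc (0:ℝ) T := Set.left_mem_Icc.2 hT.le
  have hTmem : T ∈ Set.Icc (0:ℝ) T := Set.right_mem_Icc.2 hT.le
  -- truncated version of v
  set g : ℝ → ℝ := fun t => max 0 (min (v t) C) with hgdef
  have hgmeas : Measurable g := measurable_const.max (hv.min measurable_const)
  have hg0 : ∀ t, 0 ≤ g t := fun t => le_max_left _ _
  have hgC : ∀ t, g t ≤ C := fun t => max_le hC.le (min_le_right _ _)
  have hgv : ∀ t ∈ Set.Icc (0:ℝ) T, g t ≤ v t := fun t ht =>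
    max_le (hv0 t ht) (min_le_left _ _)
  have hgint : IntegrableOn g (Set.Icc (0:ℝ) T) := by
    refine Integrable.mono' (g := fun _ => C) ?_ hgmeas.aestronglyMeasurable
      (Filter.Eventually.of_forall fun t => ?_)
    · exact integrableOn_const measure_Icc_lt_top.ne
    · rw [Real.norm_eq_abs, abs_of_nonneg (hg0 t)]; exact hgC t
  -- the set where v ≥ C
  set S : Set ℝ := {t ∈ Set.Icc (0:ℝ) T | C ≤ v t} with hSdef
  have hSsub : S ⊆ Set.Icc (0:ℝ) T := fun t ht => ht.1
  have hSmeas : MeasurableSet S :=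
    measurableSet_Icc.inter (measurableSet_le measurable_const hv)
  have hSfin : volume S ≠ ⊤ :=
    ((measure_mono hSsub).trans_lt measure_Icc_lt_top).ne
  have hτS : τ ≤ (volume S).toReal := by
    have := ENNReal.toReal_mono hSfin hmeas
    rwa [ENNReal.toReal_ofReal hτ.le] at this
  -- lower bound on the integral of g
  have hCτ : C * τ ≤ ∫ t in Set.Icc (0:ℝ) T, g t := by
    calc C * τ ≤ C * (volume S).toReal := by
          exact mul_le_mul_of_nonneg_left hτS hC.le
      _ = ∫ _ in S, C := by rw [setIntegral_const, smul_eq_mul, mul_comm]; rfl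
      _ = ∫ t in S, g t := by
          refine (setIntegral_congr_fun hSmeas fun t ht => ?_).symm
          have : min (v t) C = C := min_eq_right ht.2
          simp [hgdef, this, hC.le]
      _ ≤ ∫ t in Set.Icc (0:ℝ) T, g t := by
          refine setIntegral_mono_set hgint
            (Filter.Eventually.of_forall fun t => hg0 t) hSsub.eventuallyLE
  have hInt : C * τ ≤ ∫ t in (0:ℝ)..T, g t := by
    rwa [intervalIntegral.integral_of_le hT.le, ← integral_Icc_eq_integral_Ioc]
  constructor
  · -- case a > 1
    intro ha1
    have ha1' : (0:ℝ) < a - 1 := by linarith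
    -- G t = -(u t ^ (1 - a))
    set G : ℝ → ℝ := fun t => -(u t ^ (1 - a)) with hGdef
    have HG : ∀ t ∈ Set.Icc (0:ℝ) T,
        HasDerivAt G ((a - 1) * (u t ^ (-a) * u' t)) t := by
      intro t ht
      have h : HasDerivAt G _ t := ((hu t ht).rpow_const (p := 1 - a) (Or.inl (hupos t ht).ne')).neg
      convert h using 1
      rw [show (1 - a) - 1 = -a by ring]
      ring
    have hcont : ContinuousOn G (Set.Icc (0:ℝ) T) := fun t ht =>
      (HG t ht).continuousAt.continuousWithinAt
    have hφle : ∀ x ∈ Set.Ioo (0:ℝ) T,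
        (a - 1) * g x ≤ (a - 1) * (u x ^ (-a) * u' x) := by
      intro x hx
      have hxI : x ∈ Set.Icc (0:ℝ) T := Set.Ioo_subset_Icc_self hx
      have hux : 0 < u x := hupos x hxI
      have h1 : u x ^ a * g x ≤ u' x := by
        refine le_trans ?_ (hineq x hxI)
        exact mul_le_mul_of_nonneg_left (hgv x hxI) (Real.rpow_pos_of_pos hux a).le
      have h2 : (0:ℝ) < u x ^ (-a) := Real.rpow_pos_of_pos hux _
      have h3 : g x ≤ u x ^ (-a) * u' x := by
        calc g x = u x ^ (-a) * (u x ^ a * g x) := by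
              rw [← mul_assoc, ← Real.rpow_add hux]
              simp
          _ ≤ u x ^ (-a) * u' x := mul_le_mul_of_nonneg_left h1 h2.le
      exact mul_le_mul_of_nonneg_left h3 ha1'.le
    have main : (∫ y in (0:ℝ)..T, (a - 1) * g y) ≤ G T - G 0 :=
      intervalIntegral.integral_le_sub_of_hasDeriv_right_of_le hT.le hcont
        (fun x hx => (HG x (Set.Ioo_subset_Icc_self hx)).hasDerivWithinAt)
        (hgint.const_mul _) hφle
    rw [intervalIntegral.integral_const_mul] at main
    have hchain : (a - 1) * (C * τ) ≤ u 0 ^ (1 - a) - u T ^ (1 - a) := by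
      have := mul_le_mul_of_nonneg_left hInt ha1'.le
      simp only [hGdef] at main
      linarith
    have hTpos : (0:ℝ) < u T ^ (1 - a) := Real.rpow_pos_of_pos (hupos T hTmem) _
    have hlt : (a - 1) * C * τ < u 0 ^ (1 - a) := by nlinarith
    refine ⟨hlt, ?_⟩
    set K : ℝ := u 0 ^ (1 - a) - (a - 1) * C * τ with hKdef
    have hKpos : 0 < K := by linarith
    have hle : u T ^ (1 - a) ≤ K := by
      have : (a - 1) * (C * τ) = (a - 1) * C * τ := by ring
      linarith [hchain]
    have hexp : ((1 : ℝ) - a) * (-(1 / (a - 1))) = 1 := by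
      field_simp
      ring
    calc K ^ (-(1 / (a - 1)))
        ≤ (u T ^ (1 - a)) ^ (-(1 / (a - 1))) := by
          refine Real.rpow_le_rpow_of_nonpos hTpos hle ?_
          have : 0 < 1 / (a - 1) := by positivity
          linarith
      _ = u T ^ ((1 - a) * (-(1 / (a - 1)))) := by
          rw [← Real.rpow_mul (hupos T hTmem).le]
      _ = u T := by rw [hexp, Real.rpow_one]
  · -- case a = 1
    intro ha1
    subst ha1
    set G : ℝ → ℝ := fun t => Real.log (u t) with hGdef
    have HG : ∀ t ∈ Set.Icc (0:ℝ) T, HasDerivAt G (u' t / u t) t := fun t ht =>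
      (hu t ht).log (hupos t ht).ne'
    have hcont : ContinuousOn G (Set.Icc (0:ℝ) T) := fun t ht =>
      (HG t ht).continuousAt.continuousWithinAt
    have hφle : ∀ x ∈ Set.Ioo (0:ℝ) T, g x ≤ u' x / u x := by
      intro x hx
      have hxI : x ∈ Set.Icc (0:ℝ) T := Set.Ioo_subset_Icc_self hx
      have hux : 0 < u x := hupos x hxI
      rw [le_div_iff₀ hux]
      have h := hineq x hxI
      rw [Real.rpow_one] at h
      nlinarith [hgv x hxI]
    have main : (∫ y in (0:ℝ)..T, g y) ≤ G T - G 0 :=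
      intervalIntegral.integral_le_sub_of_hasDeriv_right_of_le hT.le hcont
        (fun x hx => (HG x (Set.Ioo_subset_Icc_self hx)).hasDerivWithinAt)
        hgint hφle
    have hlog : Real.log (u 0) + C * τ ≤ Real.log (u T) := by
      simp only [hGdef] at main
      linarith
    calc u 0 * Real.exp (C * τ)
        = Real.exp (Real.log (u 0) + C * τ) := by
          rw [Real.exp_add, Real.exp_log (hupos 0 h0mem)]
      _ ≤ Real.exp (Real.log (u T)) := Real.exp_le_exp.2 hlog
      _ = u T := Real.exp_log (hupos T hTmem)
end
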